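/- arXiv:1411.6495 — 4 statements merged into one kernel-verified Lean document; each statement's English description precedes it below -/
import Mathlib

section
/- (Bass–Tate Lemma, explicit coboundary form.) Let a ∈ F with a ≠ 0 and a ≠ 1. Then the 2-cocycle (γ₁, γ₂) ↦ χ_{1−a}(γ₁)·χ_a(γ₂) on G_F with values in ℤ/pℤ is a coboundary: there exists a function h : G_F → ℤ/pℤ such that for all γ₁, γ₂ ∈ G_F one has χ_{1−a}(γ₁)·χ_a(γ₂) = h(γ₁) + h(γ₂) − h(γ₁γ₂). Equivalently, the cup product (1−a) ∪ (a) vanishes in H²(G_F, ℤ/pℤ). -/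
open Finset Polynomial

/-- Product over all `n`-th roots of unity: `∏ (1 - ζ^i α) = 1 - α^n`. -/
theorem bt_prod_one_sub_zeta_pow_mul {K : Type*} [Field K] [IsAlgClosed K] {n : ℕ} [NeZero n]
    {ζ α : K} (hζ : IsPrimitiveRoot ζ n) :
    ∏ i ∈ range n, (1 - ζ ^ i * α) = 1 - α ^ n := by
  have hmonic : (X ^ n - C (α ^ n) : K[X]).Monic := monic_X_pow_sub_C _ (NeZero.ne n)
  have hsplit : Splits (X ^ n - C (α ^ n) : K[X]) := IsAlgClosed.splits _
  have hroots : (X ^ n - C (α ^ n) : K[X]).roots = (Multiset.range n).map (ζ ^ · * α) := by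
    rw [← nthRoots]; exact hζ.nthRoots_eq rfl
  have h2 := hsplit.eq_prod_roots_of_monic hmonic
  have heval := congrArg (Polynomial.eval 1) h2
  rw [hroots] at heval
  simpa [Multiset.map_map, Function.comp, Polynomial.eval_multiset_prod,
    Finset.prod_eq_multiset_prod, Finset.range_val] using heval.symm

/-- Weighted telescoping identity in a commutative monoid. -/
theorem bt_weighted_shift {M : Type*} [CommMonoid M] (g : ℕ → M) (m : ℕ) :
    (∏ i ∈ range m, g (i + 1) ^ i) * ∏ i ∈ range m, g (i + 1)
      = (∏ i ∈ range m, g i ^ i) * g m ^ m := by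
  induction m with
  | zero => simp
  | succ m ih =>
    rw [prod_range_succ, prod_range_succ, prod_range_succ (fun i => g i ^ i)]
    calc (∏ i ∈ range m, g (i+1) ^ i) * g (m+1) ^ m * ((∏ i ∈ range m, g (i+1)) * g (m+1))
        = ((∏ i ∈ range m, g (i+1) ^ i) * ∏ i ∈ range m, g (i+1)) * (g (m+1) ^ m * g (m+1)) :=
          mul_mul_mul_comm _ _ _ _
      _ = (∏ i ∈ range m, g i ^ i) * g m ^ m * (g (m+1) ^ m * g (m+1)) := by rw [ih]
      _ = (∏ i ∈ range m, g i ^ i) * g m ^ m * g (m+1) ^ (m+1) := by rw [pow_succ]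

/-- Shift invariance of a full-period product, given `g m = g 0` and cancellability. -/
theorem bt_period_shift {K : Type*} [Field K] (g : ℕ → K) (m : ℕ) (h : g m = g 0)
    (h0 : g 0 ≠ 0) : ∏ i ∈ range m, g (i + 1) = ∏ i ∈ range m, g i := by
  have h1 : (∏ i ∈ range m, g (i + 1)) * g 0 = (∏ i ∈ range m, g i) * g 0 := by
    rw [← prod_range_succ' g m, prod_range_succ, h]
  exact mul_right_cancel₀ h0 h1

/-- **Bass–Tate Lemma, explicit coboundary form.**
Let `F` be a field containing a primitive `p`-th root of unity `ξ`, with absolute Galois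
group `G_F = Gal(F̄/F)`.  For `a ∈ F^×`, fixing `α` with `α^p = a`, the Kummer character
`χ_a : G_F → ℤ/pℤ` is determined by `γ(α) = ξ^{χ_a(γ)}·α`.  If `a ≠ 0, 1` then the
2-cocycle `(γ₁, γ₂) ↦ χ_{1−a}(γ₁)·χ_a(γ₂)` is a coboundary: there is `h : G_F → ℤ/pℤ`
with `χ_{1−a}(γ₁)·χ_a(γ₂) = h(γ₁) + h(γ₂) − h(γ₁γ₂)` for all `γ₁, γ₂`; equivalently,
`(1−a) ∪ (a) = 0` in `H²(G_F, ℤ/pℤ)`. -/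
theorem bass_tate_explicit_coboundary
    (p : ℕ) [Fact p.Prime]
    (F : Type*) [Field F] (ξ : F) (hξ : IsPrimitiveRoot ξ p)
    (a : F) (ha0 : a ≠ 0) (ha1 : a ≠ 1)
    (α β : AlgebraicClosure F)
    (hα : α ^ p = algebraMap F (AlgebraicClosure F) a)
    (hβ : β ^ p = algebraMap F (AlgebraicClosure F) (1 - a))
    (χa χb : (AlgebraicClosure F ≃ₐ[F] AlgebraicClosure F) → ZMod p)
    (hχa : ∀ γ : AlgebraicClosure F ≃ₐ[F] AlgebraicClosure F,
      γ α = algebraMap F (AlgebraicClosure F) ξ ^ (χa γ).val * α)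
    (hχb : ∀ γ : AlgebraicClosure F ≃ₐ[F] AlgebraicClosure F,
      γ β = algebraMap F (AlgebraicClosure F) ξ ^ (χb γ).val * β) :
    ∃ h : (AlgebraicClosure F ≃ₐ[F] AlgebraicClosure F) → ZMod p,
      ∀ γ₁ γ₂ : AlgebraicClosure F ≃ₐ[F] AlgebraicClosure F,
        χb γ₁ * χa γ₂ = h γ₁ + h γ₂ - h (γ₁ * γ₂) := by
  have hp : 0 < p := (Fact.out : p.Prime).pos
  haveI : NeZero p := ⟨hp.ne'⟩
  set φ := algebraMap F (AlgebraicClosure F) with hφdef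
  have hφinj : Function.Injective φ := φ.injective
  set ξ' : AlgebraicClosure F := φ ξ with hξ'def
  have hξ' : IsPrimitiveRoot ξ' p := hξ.map_of_injective hφinj
  have hξp1 : ξ' ^ p = 1 := hξ'.pow_eq_one
  -- basic nonvanishing
  have hα0 : α ≠ 0 := by
    intro h; apply ha0
    have h2 : φ a = 0 := by rw [← hα, h, zero_pow hp.ne']
    exact hφinj (by simpa using h2)
  have hβ0 : β ≠ 0 := by
    intro h
    have h2 : φ (1 - a) = 0 := by rw [← hβ, h, zero_pow hp.ne']
    have h3 : (1 : F) - a = 0 := hφinj (by simpa using h2)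
    exact ha1 (sub_eq_zero.mp h3).symm
  -- The elements A n = 1 - ξ'^n α
  set A : ℕ → AlgebraicClosure F := fun n => 1 - ξ' ^ n * α with hAdef
  have hAper : ∀ n, A (n + p) = A n := by
    intro n; simp only [hAdef, pow_add, hξp1, mul_one]
  have hAne : ∀ n, A n ≠ 0 := by
    intro n h
    have h1 : ξ' ^ n * α = 1 := by
      have h2 := sub_eq_zero.mp h; linear_combination -h2
    have h2 : (ξ' ^ n * α) ^ p = 1 := by rw [h1, one_pow]
    rw [mul_pow, ← pow_mul, mul_comm n p, pow_mul, hξp1, one_pow, one_mul, hα] at h2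
    exact ha1 (hφinj (by simpa using h2))
  have hγA : ∀ (γ : AlgebraicClosure F ≃ₐ[F] AlgebraicClosure F) (n : ℕ),
      γ (A n) = A (n + (χa γ).val) := by
    intro γ n
    have hcom : γ ξ' = ξ' := γ.commutes ξ
    simp only [hAdef]
    rw [map_sub, map_one, map_mul, map_pow, hcom, hχa γ, pow_add]
    ring
  -- full-period product
  have hβpe : β ^ p = 1 - α ^ p := by rw [hβ, map_sub, map_one, hα]
  have hS0 : ∏ i ∈ range p, A i = β ^ p := by
    rw [hβpe, ← bt_prod_one_sub_zeta_pow_mul (α := α) hξ']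
  have hS : ∀ k, ∏ i ∈ range p, A (i + k) = β ^ p := by
    intro k; induction k with
    | zero => simpa using hS0
    | succ k ih =>
      have shift : ∏ i ∈ range p, A (i + 1 + k) = ∏ i ∈ range p, A (i + k) := by
        have := bt_period_shift (fun i => A (i + k)) p
          (by simp only [Nat.zero_add]; rw [add_comm]; exact hAper k)
          (by simp only [Nat.zero_add]; exact hAne k)
        simpa using this
      calc ∏ i ∈ range p, A (i + (k + 1))
          = ∏ i ∈ range p, A (i + 1 + k) :=
            Finset.prod_congr rfl fun i _ => by rw [show i + (k+1) = i + 1 + k by omega]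
        _ = ∏ i ∈ range p, A (i + k) := shift
        _ = β ^ p := ih
  -- T and w
  set T : ℕ → AlgebraicClosure F := fun k => ∏ j ∈ range k, A j with hTdef
  have hTne : ∀ k, T k ≠ 0 := fun k => prod_ne_zero_iff.mpr fun i _ => hAne i
  have hTp : ∀ n, T (n + p) = T n * β ^ p := by
    intro n
    have h1 : T (n + p) = T n * ∏ i ∈ range p, A (n + i) := by
      simp only [hTdef]; exact prod_range_add A n p
    rw [h1, ← hS n]
    congr 1
    exact Finset.prod_congr rfl fun i _ => by rw [add_comm n i]
  have hTP : ∀ (c n : ℕ), T (n + p * c) = T n * (β ^ p) ^ c := by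
    intro c; induction c with
    | zero => simp
    | succ c ih =>
      intro n
      rw [mul_add, mul_one, ← add_assoc, hTp, ih, pow_succ]; ring
  set w : AlgebraicClosure F := ∏ i ∈ range p, A i ^ i with hwdef
  have hw0 : w ≠ 0 := prod_ne_zero_iff.mpr fun i _ => pow_ne_zero _ (hAne i)
  -- the key transformation law for w
  have hP : ∀ k, (∏ i ∈ range p, A (i + k) ^ i) * β ^ (p * k) = w * T k ^ p := by
    intro k; induction k with
    | zero => simp [hwdef, hTdef]
    | succ k ih =>
      have hApk : A (p + k) = A k := by rw [add_comm p k]; exact hAper k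
      have c1 : ∏ i ∈ range p, A (i + 1 + k) ^ i = ∏ i ∈ range p, A (i + (k+1)) ^ i :=
        Finset.prod_congr rfl fun i _ => by rw [show i + 1 + k = i + (k+1) by omega]
      have c2 : ∏ i ∈ range p, A (i + 1 + k) = β ^ p :=
        (Finset.prod_congr rfl fun i _ => by rw [show i + 1 + k = i + (k+1) by omega]).trans
          (hS (k+1))
      have step' : (∏ i ∈ range p, A (i + (k+1)) ^ i) * β ^ p
          = (∏ i ∈ range p, A (i + k) ^ i) * A k ^ p := by
        calc (∏ i ∈ range p, A (i + (k+1)) ^ i) * β ^ p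
            = (∏ i ∈ range p, A (i + 1 + k) ^ i) * ∏ i ∈ range p, A (i + 1 + k) := by
              rw [c1, c2]
          _ = (∏ i ∈ range p, A (i + k) ^ i) * A (p + k) ^ p :=
              bt_weighted_shift (fun i => A (i + k)) p
          _ = (∏ i ∈ range p, A (i + k) ^ i) * A k ^ p := by rw [hApk]
      have hTk1 : T (k + 1) = T k * A k := prod_range_succ _ _
      calc (∏ i ∈ range p, A (i + (k+1)) ^ i) * β ^ (p * (k+1))
          = ((∏ i ∈ range p, A (i + (k+1)) ^ i) * β ^ p) * β ^ (p * k) := by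
            rw [mul_add, mul_one, pow_add]; ring
        _ = ((∏ i ∈ range p, A (i + k) ^ i) * A k ^ p) * β ^ (p * k) := by rw [step']
        _ = ((∏ i ∈ range p, A (i + k) ^ i) * β ^ (p * k)) * A k ^ p := by ring
        _ = w * T k ^ p * A k ^ p := by rw [ih]
        _ = w * T (k+1) ^ p := by rw [hTk1, mul_pow]; ring
  -- choose a p-th root W of w
  obtain ⟨W, hW⟩ := IsAlgClosed.exists_pow_nat_eq w hp
  have hW0 : W ≠ 0 := fun h => hw0 (by rw [← hW, h, zero_pow hp.ne'])
  -- the transformation of w under γ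
  have hγw : ∀ γ : AlgebraicClosure F ≃ₐ[F] AlgebraicClosure F,
      γ w * β ^ (p * (χa γ).val) = w * T (χa γ).val ^ p := by
    intro γ
    have h1 : γ w = ∏ i ∈ range p, A (i + (χa γ).val) ^ i := by
      rw [hwdef, map_prod]
      exact Finset.prod_congr rfl fun i _ => by rw [map_pow, hγA]
    rw [h1]; exact hP _
  -- define h γ
  have hH : ∀ γ : AlgebraicClosure F ≃ₐ[F] AlgebraicClosure F, ∃ m : ZMod p,
      γ W * β ^ (χa γ).val = ξ' ^ m.val * (T (χa γ).val * W) := by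
    intro γ
    have hv : T (χa γ).val * W ≠ 0 := mul_ne_zero (hTne _) hW0
    have hup : (γ W * β ^ (χa γ).val) ^ p = (T (χa γ).val * W) ^ p := by
      rw [mul_pow, ← map_pow, hW, ← pow_mul, mul_comm ((χa γ).val) p, hγw, mul_pow, ← hW]
      ring
    have hdiv : ((γ W * β ^ (χa γ).val) / (T (χa γ).val * W)) ^ p = 1 := by
      rw [div_pow, hup, div_self (pow_ne_zero _ hv)]
    obtain ⟨i, hip, hi⟩ := hξ'.eq_pow_of_pow_eq_one hdiv
    refine ⟨(i : ZMod p), ?_⟩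
    rw [ZMod.val_cast_of_lt hip]
    rw [eq_div_iff hv] at hi
    exact hi.symm
  choose h hh using hH
  refine ⟨h, fun γ₁ γ₂ => ?_⟩
  -- notation
  set k1 := (χa γ₁).val with hk1
  set k2 := (χa γ₂).val with hk2
  set k12 := (χa (γ₁ * γ₂)).val with hk12
  set b1 := (χb γ₁).val with hb1
  -- additivity of χa values mod p
  have horder : orderOf ξ' = p := (hξ'.eq_orderOf).symm
  have hred : ∀ m : ℕ, ξ' ^ m = ξ' ^ (m % p) := by
    intro m
    conv_lhs => rw [← Nat.div_add_mod m p]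
    rw [pow_add, pow_mul, hξp1, one_pow, one_mul]
  have hpowiff : ∀ m n : ℕ, ξ' ^ m = ξ' ^ n ↔ m ≡ n [MOD p] := by
    intro m n
    constructor
    · intro hmn
      rw [hred m, hred n] at hmn
      exact hξ'.pow_inj (Nat.mod_lt _ hp) (Nat.mod_lt _ hp) hmn
    · intro hmn
      rw [hred m, hred n, Nat.ModEq] at *
      rw [hmn]
  have hmodeq : k12 ≡ k1 + k2 [MOD p] := by
    have h1 : (γ₁ * γ₂) α = ξ' ^ k12 * α := hχa _
    have h2 : (γ₁ * γ₂) α = ξ' ^ (k1 + k2) * α := by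
      have h3 : (γ₁ * γ₂) α = γ₁ (γ₂ α) := rfl
      rw [h3, hχa γ₂, map_mul, map_pow, AlgEquiv.commutes, hχa γ₁, pow_add]
      ring
    have h4 := mul_right_cancel₀ hα0 (h1.symm.trans h2)
    exact (hpowiff _ _).mp h4
  have hle : k12 ≤ k1 + k2 := by
    rcases lt_or_ge (k1 + k2) p with hlt | hge
    · exact (Nat.ModEq.eq_of_lt_of_lt hmodeq (ZMod.val_lt _) hlt).le
    · exact (ZMod.val_lt (χa (γ₁ * γ₂))).le.trans hge
  obtain ⟨c, hc⟩ : ∃ c, k1 + k2 = k12 + p * c := by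
    have hd : p ∣ k1 + k2 - k12 := (Nat.modEq_iff_dvd' hle).mp hmodeq
    obtain ⟨c, hc⟩ := hd
    exact ⟨c, by omega⟩
  -- the three defining equations
  have e1 : γ₁ W * β ^ k1 = ξ' ^ (h γ₁).val * (T k1 * W) := hh γ₁
  have e2 : γ₂ W * β ^ k2 = ξ' ^ (h γ₂).val * (T k2 * W) := hh γ₂
  have e12 : (γ₁ * γ₂) W * β ^ k12 = ξ' ^ (h (γ₁ * γ₂)).val * (T k12 * W) := hh (γ₁ * γ₂)
  -- apply γ₁ to e2
  have ge2 : (γ₁ * γ₂) W * (ξ' ^ b1 * β) ^ k2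
      = ξ' ^ (h γ₂).val * ((∏ j ∈ range k2, A (j + k1)) * γ₁ W) := by
    have h1 := congrArg γ₁ e2
    rw [map_mul, map_mul, map_mul, map_pow, map_pow, γ₁.commutes ξ] at h1
    have h2 : γ₁ (T k2) = ∏ j ∈ range k2, A (j + k1) := by
      rw [hTdef]; simp only [map_prod]
      exact Finset.prod_congr rfl fun j _ => hγA γ₁ j
    rw [h2, hχb γ₁] at h1
    rw [show (γ₁ * γ₂) W = γ₁ (γ₂ W) from rfl]
    exact h1
  -- assemble: multiply ge2 by β^k1 and use e1
  have hT12 : T k1 * ∏ j ∈ range k2, A (j + k1) = T (k1 + k2) := by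
    have h1 : T (k1 + k2) = T k1 * ∏ i ∈ range k2, A (k1 + i) := by
      simp only [hTdef]; exact prod_range_add A k1 k2
    rw [h1]
    congr 1
    exact Finset.prod_congr rfl fun i _ => by rw [add_comm]
  have EqA : (γ₁ * γ₂) W * β ^ (k1 + k2) * ξ' ^ (b1 * k2)
      = ξ' ^ ((h γ₁).val + (h γ₂).val) * (T (k1 + k2) * W) := by
    have step1 : (γ₁ * γ₂) W * (ξ' ^ b1 * β) ^ k2 * β ^ k1
        = ξ' ^ (h γ₂).val * ((∏ j ∈ range k2, A (j + k1)) * (γ₁ W * β ^ k1)) := by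
      rw [ge2]; ring
    rw [e1] at step1
    calc (γ₁ * γ₂) W * β ^ (k1 + k2) * ξ' ^ (b1 * k2)
        = (γ₁ * γ₂) W * (ξ' ^ b1 * β) ^ k2 * β ^ k1 := by
          rw [mul_pow, ← pow_mul, pow_add]; ring
      _ = ξ' ^ (h γ₂).val * ((∏ j ∈ range k2, A (j + k1))
            * (ξ' ^ (h γ₁).val * (T k1 * W))) := step1
      _ = ξ' ^ ((h γ₁).val + (h γ₂).val)
            * ((T k1 * ∏ j ∈ range k2, A (j + k1)) * W) := by rw [pow_add]; ring
      _ = ξ' ^ ((h γ₁).val + (h γ₂).val) * (T (k1 + k2) * W) := by rw [hT12]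
  -- compare with e12
  have key : ξ' ^ ((h (γ₁ * γ₂)).val + b1 * k2) = ξ' ^ ((h γ₁).val + (h γ₂).val) := by
    have hTc : T (k1 + k2) = T k12 * (β ^ p) ^ c := by rw [hc]; exact hTP c k12
    have hβc : β ^ (k1 + k2) = β ^ k12 * (β ^ p) ^ c := by
      rw [hc, pow_add, ← pow_mul]
    rw [hTc, hβc] at EqA
    have hbpc : (β ^ p) ^ c ≠ 0 := pow_ne_zero _ (pow_ne_zero _ hβ0)
    have EqB : (γ₁ * γ₂) W * β ^ k12 * ξ' ^ (b1 * k2)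
        = ξ' ^ ((h γ₁).val + (h γ₂).val) * (T k12 * W) := by
      apply mul_right_cancel₀ hbpc
      calc (γ₁ * γ₂) W * β ^ k12 * ξ' ^ (b1 * k2) * (β ^ p) ^ c
          = (γ₁ * γ₂) W * (β ^ k12 * (β ^ p) ^ c) * ξ' ^ (b1 * k2) := by ring
        _ = ξ' ^ ((h γ₁).val + (h γ₂).val) * (T k12 * (β ^ p) ^ c * W) := EqA
        _ = ξ' ^ ((h γ₁).val + (h γ₂).val) * (T k12 * W) * (β ^ p) ^ c := by ring
    rw [e12] at EqB
    have hv : T k12 * W ≠ 0 := mul_ne_zero (hTne _) hW0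
    apply mul_right_cancel₀ hv
    rw [pow_add]
    calc ξ' ^ (h (γ₁ * γ₂)).val * ξ' ^ (b1 * k2) * (T k12 * W)
        = ξ' ^ (h (γ₁ * γ₂)).val * (T k12 * W) * ξ' ^ (b1 * k2) := by ring
      _ = ξ' ^ ((h γ₁).val + (h γ₂).val) * (T k12 * W) := EqB
  -- read off the congruence mod p
  have hmod : ((h (γ₁ * γ₂)).val + b1 * k2 : ℕ) ≡ ((h γ₁).val + (h γ₂).val : ℕ) [MOD p] :=
    (hpowiff _ _).mp key
  have hz : (((h (γ₁ * γ₂)).val + b1 * k2 : ℕ) : ZMod p)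
      = (((h γ₁).val + (h γ₂).val : ℕ) : ZMod p) :=
    (ZMod.natCast_eq_natCast_iff _ _ _).mpr hmod
  rw [hb1, hk2] at hz
  push_cast at hz
  simp only [ZMod.natCast_val, ZMod.cast_id] at hz
  linear_combination hz
end

section
/- (Classification of extensions of ℤ/pⁿℤ by a cyclic 𝔽_p[ℤ/pⁿℤ]-module.) Let E be a finite group with a normal subgroup N such that N is an elementary abelian p-group, E/N is cyclic of order pⁿ, and, after fixing an isomorphism θ : E/N ≅ G_n, the conjugation action of E/N on N makes N isomorphic to A_i as an 𝔽_p[G_n]-module for some 1 ≤ i ≤ pⁿ. If i = pⁿ, then E ≅ A_{pⁿ} ⋊ G_n. If 1 ≤ i < pⁿ, then E is isomorphic to A_i ⋊ G_n or to A_i • G_n. -/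
open Polynomial

/-! ### The groups `A_ℓ ⋊ G_n` and `A_ℓ • G_n`, and embedding problems

`G_n` denotes the cyclic group `ℤ/pⁿℤ` with fixed generator `σ`, and
`A_ℓ = 𝔽_p[G_n]/⟨(σ−1)^ℓ⟩`. -/

/-- The group algebra `𝔽_p[ℤ/pⁿℤ]` of the cyclic group `G_n = ℤ/pⁿℤ`. -/
abbrev GrpAlg (p n : ℕ) : Type :=
  MonoidAlgebra (ZMod p) (Multiplicative (ZMod (p ^ n)))

/-- The image in the group algebra of the fixed generator `σ` of `ℤ/pⁿℤ`. -/
noncomputable def sigGen (p n : ℕ) : GrpAlg p n :=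
  MonoidAlgebra.of (ZMod p) (Multiplicative (ZMod (p ^ n)))
    (Multiplicative.ofAdd (1 : ZMod (p ^ n)))

/-- The cyclic `𝔽_p[G_n]`-module `A_ℓ = 𝔽_p[G_n]/⟨(σ−1)^ℓ⟩` (as a quotient ring; its
underlying additive group is the module, and `σ` acts by multiplication by `σ`). -/
abbrev Amod (p n ℓ : ℕ) : Type :=
  GrpAlg p n ⧸ Ideal.span {(sigGen p n - 1) ^ ℓ}

/-- The image of `σ` in `A_ℓ`. -/
noncomputable def sigA (p n ℓ : ℕ) : Amod p n ℓ :=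
  Ideal.Quotient.mk (Ideal.span {(sigGen p n - 1) ^ ℓ}) (sigGen p n)

lemma sigGen_pow_order (p n : ℕ) : sigGen p n ^ p ^ n = 1 := by
  rw [sigGen, ← map_pow]
  have h : (Multiplicative.ofAdd (1 : ZMod (p ^ n))) ^ p ^ n = 1 := by
    rw [← ofAdd_nsmul, nsmul_eq_mul, mul_one, ZMod.natCast_self, ofAdd_zero]
  rw [h, map_one]

lemma sigA_pow_order (p n ℓ : ℕ) : sigA p n ℓ ^ p ^ n = 1 := by
  rw [sigA, ← map_pow, sigGen_pow_order, map_one]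

lemma sigA_pow_val_add (p n ℓ : ℕ) [NeZero (p ^ n)] (a b : ZMod (p ^ n)) :
    sigA p n ℓ ^ (a + b).val = sigA p n ℓ ^ a.val * sigA p n ℓ ^ b.val := by
  rw [ZMod.val_add, ← pow_add]
  exact (pow_eq_pow_mod (a.val + b.val) (sigA_pow_order p n ℓ)).symm

set_option maxHeartbeats 1000000 in
set_option synthInstance.maxHeartbeats 200000 in
lemma sigA_sub_one_pow_self (p n ℓ : ℕ) : (sigA p n ℓ - 1) ^ ℓ = 0 := by
  have h : sigA p n ℓ - 1
      = Ideal.Quotient.mk (Ideal.span {(sigGen p n - 1) ^ ℓ}) (sigGen p n - 1) := by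
    rw [map_sub, map_one, sigA]
  rw [h, ← map_pow, Ideal.Quotient.eq_zero_iff_mem]
  exact Ideal.subset_span rfl

lemma sigA_mul_eps (p n ℓ : ℕ) :
    sigA p n ℓ * (sigA p n ℓ - 1) ^ (ℓ - 1) = (sigA p n ℓ - 1) ^ (ℓ - 1) := by
  rcases Nat.eq_zero_or_pos ℓ with h | h
  · subst h
    have h0 : (0 : Amod p n 0) = 1 := by
      have := sigA_sub_one_pow_self p n 0
      rw [pow_zero] at this
      exact this.symm
    haveI : Subsingleton (Amod p n 0) := subsingleton_of_zero_eq_one h0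
    exact Subsingleton.elim _ _
  · have h2 : (sigA p n ℓ - 1) * (sigA p n ℓ - 1) ^ (ℓ - 1) = 0 := by
      have h3 : (sigA p n ℓ - 1) * (sigA p n ℓ - 1) ^ (ℓ - 1)
          = (sigA p n ℓ - 1) ^ (ℓ - 1 + 1) := by
        rw [pow_succ]; ring
      rw [h3, Nat.sub_add_cancel h]
      exact sigA_sub_one_pow_self p n ℓ
    linear_combination h2

lemma sigA_pow_mul_eps (p n ℓ : ℕ) (k : ℕ) :
    sigA p n ℓ ^ k * (sigA p n ℓ - 1) ^ (ℓ - 1) = (sigA p n ℓ - 1) ^ (ℓ - 1) := by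
  induction k with
  | zero => rw [pow_zero, one_mul]
  | succ m ih =>
    rw [pow_succ, mul_assoc, sigA_mul_eps, ih]

lemma carry_cocycle (p n ℓ : ℕ) [NeZero (p ^ n)] (x y z : ZMod (p ^ n)) :
    ((if x.val + y.val < p ^ n then (0 : Amod p n ℓ) else (sigA p n ℓ - 1) ^ (ℓ - 1)) +
      (if (x + y).val + z.val < p ^ n then (0 : Amod p n ℓ) else (sigA p n ℓ - 1) ^ (ℓ - 1)))
    = ((if y.val + z.val < p ^ n then (0 : Amod p n ℓ) else (sigA p n ℓ - 1) ^ (ℓ - 1)) +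
      (if x.val + (y + z).val < p ^ n then (0 : Amod p n ℓ) else (sigA p n ℓ - 1) ^ (ℓ - 1))) := by
  have hx := ZMod.val_lt x
  have hy := ZMod.val_lt y
  have hz := ZMod.val_lt z
  rw [ZMod.val_add x y, ZMod.val_add y z]
  rcases Nat.lt_or_ge (x.val + y.val) (p ^ n) with h1 | h1 <;>
    rcases Nat.lt_or_ge (y.val + z.val) (p ^ n) with h2 | h2
  · rw [Nat.mod_eq_of_lt h1, Nat.mod_eq_of_lt h2]
    split_ifs <;> first | ring1 | (exfalso; omega)
  · have e2 : (y.val + z.val) % p ^ n = y.val + z.val - p ^ n := by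
      rw [Nat.mod_eq_sub_mod h2, Nat.mod_eq_of_lt (by omega)]
    rw [Nat.mod_eq_of_lt h1, e2]
    split_ifs <;> first | ring1 | (exfalso; omega)
  · have e1 : (x.val + y.val) % p ^ n = x.val + y.val - p ^ n := by
      rw [Nat.mod_eq_sub_mod h1, Nat.mod_eq_of_lt (by omega)]
    rw [e1, Nat.mod_eq_of_lt h2]
    split_ifs <;> first | ring1 | (exfalso; omega)
  · have e1 : (x.val + y.val) % p ^ n = x.val + y.val - p ^ n := by
      rw [Nat.mod_eq_sub_mod h1, Nat.mod_eq_of_lt (by omega)]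
    have e2 : (y.val + z.val) % p ^ n = y.val + z.val - p ^ n := by
      rw [Nat.mod_eq_sub_mod h2, Nat.mod_eq_of_lt (by omega)]
    rw [e1, e2]
    split_ifs <;> first | ring1 | (exfalso; omega)

/-- The semidirect product `A_ℓ ⋊ G_n`, with multiplication
`(f₁, σ^{j₁})(f₂, σ^{j₂}) = (f₁ + σ^{j₁}·f₂, σ^{j₁+j₂})`. -/
@[ext] structure ASemi (p n ℓ : ℕ) where
  f : Amod p n ℓ
  j : ZMod (p ^ n)

namespace ASemi

variable {p n ℓ : ℕ}

noncomputable instance : Mul (ASemi p n ℓ) :=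
  ⟨fun a b => ⟨a.f + sigA p n ℓ ^ a.j.val * b.f, a.j + b.j⟩⟩
noncomputable instance : One (ASemi p n ℓ) := ⟨⟨0, 0⟩⟩
noncomputable instance : Inv (ASemi p n ℓ) :=
  ⟨fun a => ⟨-(sigA p n ℓ ^ (-a.j).val * a.f), -a.j⟩⟩

lemma mul_def (a b : ASemi p n ℓ) :
    a * b = ⟨a.f + sigA p n ℓ ^ a.j.val * b.f, a.j + b.j⟩ := rfl
lemma one_def : (1 : ASemi p n ℓ) = ⟨0, 0⟩ := rfl
lemma inv_def (a : ASemi p n ℓ) :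
    a⁻¹ = ⟨-(sigA p n ℓ ^ (-a.j).val * a.f), -a.j⟩ := rfl

noncomputable instance [NeZero (p ^ n)] : Group (ASemi p n ℓ) where
  mul_assoc a b c := by
    ext
    · show a.f + sigA p n ℓ ^ a.j.val * b.f + sigA p n ℓ ^ (a.j + b.j).val * c.f
        = a.f + sigA p n ℓ ^ a.j.val * (b.f + sigA p n ℓ ^ b.j.val * c.f)
      rw [sigA_pow_val_add]; ring
    · show a.j + b.j + c.j = a.j + (b.j + c.j)
      exact add_assoc _ _ _
  one_mul a := by
    ext
    · show (0 : Amod p n ℓ) + sigA p n ℓ ^ (0 : ZMod (p ^ n)).val * a.f = a.f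
      simp [ZMod.val_zero]
    · show (0 : ZMod (p ^ n)) + a.j = a.j
      exact zero_add _
  mul_one a := by
    ext
    · show a.f + sigA p n ℓ ^ a.j.val * 0 = a.f
      simp
    · show a.j + 0 = a.j
      exact add_zero _
  inv_mul_cancel a := by
    ext
    · show -(sigA p n ℓ ^ (-a.j).val * a.f) + sigA p n ℓ ^ (-a.j).val * a.f = 0
      exact neg_add_cancel _
    · show -a.j + a.j = 0
      exact neg_add_cancel _

end ASemi

/-- The non-split extension `A_ℓ • G_n` (for `1 ≤ ℓ < pⁿ`), with multiplication
`(f₁, σ^{j₁})(f₂, σ^{j₂}) = (f₁ + σ^{j₁}·f₂ [+ (σ−1)^{ℓ−1} if j₁+j₂ ≥ pⁿ], σ^{j₁+j₂})`,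
where `j₁, j₂` are the representatives in `{0, …, pⁿ−1}`. -/
@[ext] structure ABull (p n ℓ : ℕ) where
  f : Amod p n ℓ
  j : ZMod (p ^ n)

namespace ABull

variable {p n ℓ : ℕ}

noncomputable instance : Mul (ABull p n ℓ) :=
  ⟨fun a b => ⟨a.f + sigA p n ℓ ^ a.j.val * b.f +
      (if a.j.val + b.j.val < p ^ n then 0 else (sigA p n ℓ - 1) ^ (ℓ - 1)),
    a.j + b.j⟩⟩
noncomputable instance : One (ABull p n ℓ) := ⟨⟨0, 0⟩⟩
noncomputable instance : Inv (ABull p n ℓ) :=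
  ⟨fun a => ⟨-(sigA p n ℓ ^ (-a.j).val *
      (a.f + if a.j = 0 then 0 else (sigA p n ℓ - 1) ^ (ℓ - 1))), -a.j⟩⟩

lemma mul_def (a b : ABull p n ℓ) :
    a * b = ⟨a.f + sigA p n ℓ ^ a.j.val * b.f +
      (if a.j.val + b.j.val < p ^ n then 0 else (sigA p n ℓ - 1) ^ (ℓ - 1)),
    a.j + b.j⟩ := rfl
lemma one_def : (1 : ABull p n ℓ) = ⟨0, 0⟩ := rfl
lemma inv_def (a : ABull p n ℓ) :
    a⁻¹ = ⟨-(sigA p n ℓ ^ (-a.j).val *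
      (a.f + if a.j = 0 then 0 else (sigA p n ℓ - 1) ^ (ℓ - 1))), -a.j⟩ := rfl

noncomputable instance [NeZero (p ^ n)] : Group (ABull p n ℓ) where
  mul_assoc a b c := by
    ext
    · show a.f + sigA p n ℓ ^ a.j.val * b.f +
          (if a.j.val + b.j.val < p ^ n then 0 else (sigA p n ℓ - 1) ^ (ℓ - 1)) +
          sigA p n ℓ ^ (a.j + b.j).val * c.f +
          (if (a.j + b.j).val + c.j.val < p ^ n then 0 else (sigA p n ℓ - 1) ^ (ℓ - 1))
        = a.f + sigA p n ℓ ^ a.j.val *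
            (b.f + sigA p n ℓ ^ b.j.val * c.f +
              (if b.j.val + c.j.val < p ^ n then 0 else (sigA p n ℓ - 1) ^ (ℓ - 1))) +
          (if a.j.val + (b.j + c.j).val < p ^ n then 0 else (sigA p n ℓ - 1) ^ (ℓ - 1))
      have hmul : sigA p n ℓ ^ a.j.val *
          (if b.j.val + c.j.val < p ^ n then (0 : Amod p n ℓ)
            else (sigA p n ℓ - 1) ^ (ℓ - 1))
          = (if b.j.val + c.j.val < p ^ n then (0 : Amod p n ℓ)
            else (sigA p n ℓ - 1) ^ (ℓ - 1)) := by
        split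
        · rw [mul_zero]
        · exact sigA_pow_mul_eps p n ℓ _
      rw [sigA_pow_val_add, mul_add, mul_add, hmul]
      linear_combination carry_cocycle p n ℓ a.j b.j c.j
    · show a.j + b.j + c.j = a.j + (b.j + c.j)
      exact add_assoc _ _ _
  one_mul a := by
    ext
    · show (0 : Amod p n ℓ) + sigA p n ℓ ^ (0 : ZMod (p ^ n)).val * a.f +
          (if (0 : ZMod (p ^ n)).val + a.j.val < p ^ n then 0
            else (sigA p n ℓ - 1) ^ (ℓ - 1))
        = a.f
      rw [ZMod.val_zero, if_pos (by simpa using ZMod.val_lt a.j)]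
      simp
    · show (0 : ZMod (p ^ n)) + a.j = a.j
      exact zero_add _
  mul_one a := by
    ext
    · show a.f + sigA p n ℓ ^ a.j.val * 0 +
          (if a.j.val + (0 : ZMod (p ^ n)).val < p ^ n then 0
            else (sigA p n ℓ - 1) ^ (ℓ - 1))
        = a.f
      rw [ZMod.val_zero, if_pos (by simpa using ZMod.val_lt a.j)]
      simp
    · show a.j + 0 = a.j
      exact add_zero _
  inv_mul_cancel a := by
    ext
    · show -(sigA p n ℓ ^ (-a.j).val *
          (a.f + if a.j = 0 then 0 else (sigA p n ℓ - 1) ^ (ℓ - 1))) +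
          sigA p n ℓ ^ (-a.j).val * a.f +
          (if (-a.j).val + a.j.val < p ^ n then 0 else (sigA p n ℓ - 1) ^ (ℓ - 1))
        = 0
      rcases eq_or_ne a.j 0 with h | h
      · rw [if_pos h, h]
        rw [if_pos (by simpa using NeZero.pos (p ^ n))]
        ring
      · rw [if_neg h]
        have hval : (-a.j).val + a.j.val = p ^ n := by
          rw [ZMod.neg_val, if_neg h]
          have hlt := ZMod.val_lt a.j
          have hpos : a.j.val ≠ 0 := fun h0 => h ((ZMod.val_eq_zero a.j).mp h0)
          omega
        rw [if_neg (by omega)]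
        rw [mul_add, sigA_pow_mul_eps]
        ring
    · show -a.j + a.j = 0
      exact neg_add_cancel _

end ABull

/-- The natural projection `A_ℓ ⋊ G_n ↠ G_n`, `(f, σ^j) ↦ σ^j`. -/
noncomputable def piSemi (p n ℓ : ℕ) [NeZero (p ^ n)] :
    ASemi p n ℓ →* Multiplicative (ZMod (p ^ n)) where
  toFun a := Multiplicative.ofAdd a.j
  map_one' := rfl
  map_mul' _ _ := rfl

/-- The natural projection `A_ℓ • G_n ↠ G_n`, `(f, σ^j) ↦ σ^j`. -/
noncomputable def piBull (p n ℓ : ℕ) [NeZero (p ^ n)] :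
    ABull p n ℓ →* Multiplicative (ZMod (p ^ n)) where
  toFun a := Multiplicative.ofAdd a.j
  map_one' := rfl
  map_mul' _ _ := rfl

/-- `L` is a solution of the embedding problem `π : G ↠ Q` over `K/F`, with respect to
the fixed identification `φ : Gal(K/F) ≅ Q`: it asks that `K ⊆ L`, that `L/F` be finite
Galois, and that there be an isomorphism `ψ : Gal(L/F) ≅ G` with `π ∘ ψ = φ ∘ res`,
where `res : Gal(L/F) → Gal(K/F)` is the restriction map. -/
def IsEPSolution {F Ω : Type*} [Field F] [Field Ω] [Algebra F Ω]
    {G Q : Type*} [Group G] [Group Q] (π : G →* Q)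
    (K : IntermediateField F Ω) (φ : (↥K ≃ₐ[F] ↥K) ≃* Q)
    (L : IntermediateField F Ω) : Prop :=
  ∃ hKL : K ≤ L, FiniteDimensional F ↥L ∧ IsGalois F ↥L ∧
    ∃ ψ : (↥L ≃ₐ[F] ↥L) ≃* G,
      ∀ (g : ↥L ≃ₐ[F] ↥L) (x : ↥K),
        ((φ.symm (π (ψ g)) x : ↥K) : Ω) = ((g ⟨(x : Ω), hKL x.2⟩ : ↥L) : Ω)

/-- The embedding problem `π : G ↠ Q` is solvable over `K/F` (w.r.t. `φ`). -/
def EPSolvable {F Ω : Type*} [Field F] [Field Ω] [Algebra F Ω]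
    {G Q : Type*} [Group G] [Group Q] (π : G →* Q)
    (K : IntermediateField F Ω) (φ : (↥K ≃ₐ[F] ↥K) ≃* Q) : Prop :=
  ∃ L, IsEPSolution π K φ L

/-- `ν(G ↠ Q, K/F)`: the number of solutions of the embedding problem `π : G ↠ Q`
over `K/F` (w.r.t. `φ`) inside a fixed extension `Ω` of `F`. -/
noncomputable def epCount {F Ω : Type*} [Field F] [Field Ω] [Algebra F Ω]
    {G Q : Type*} [Group G] [Group Q] (π : G →* Q)
    (K : IntermediateField F Ω) (φ : (↥K ≃ₐ[F] ↥K) ≃* Q) : ℕ :=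
  Nat.card {L : IntermediateField F Ω // IsEPSolution π K φ L}

/-- `ν(G, F)`: the number of intermediate fields of `Ω/F` that are finite Galois over `F`
with Galois group isomorphic to `G`. -/
noncomputable def galCount (F Ω : Type*) [Field F] [Field Ω] [Algebra F Ω]
    (G : Type*) [Group G] : ℕ :=
  Nat.card {L : IntermediateField F Ω //
    FiniteDimensional F ↥L ∧ IsGalois F ↥L ∧ Nonempty ((↥L ≃ₐ[F] ↥L) ≃* G)}


-- char p instance
instance grpAlgCharP (p n : ℕ) [Fact p.Prime] : CharP (GrpAlg p n) p := by
  have : Function.Injective (algebraMap (ZMod p) (GrpAlg p n)) := by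
    intro a b hab
    have := congrArg (fun f => (f : MonoidAlgebra (ZMod p) (Multiplicative (ZMod (p^n)))).coeff 1) hab
    simpa [MonoidAlgebra.coe_algebraMap, MonoidAlgebra.coeff_single, Finsupp.single_apply] using this
  exact charP_of_injective_algebraMap this p

lemma geomSum (p n : ℕ) [Fact p.Prime] :
    ((X : (ZMod p)[X]) - 1) ^ (p ^ n - 1) = ∑ j ∈ Finset.range (p ^ n), X ^ j := by
  have hq : 1 ≤ p ^ n := Nat.one_le_pow _ _ (Fact.out : p.Prime).pos
  have hX : (X : (ZMod p)[X]) - 1 ≠ 0 := by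
    have := Polynomial.X_sub_C_ne_zero (1 : ZMod p)
    simpa using this
  apply mul_right_cancel₀ hX
  rw [geom_sum_mul, ← pow_succ, Nat.sub_add_cancel hq]
  have := sub_pow_char_pow (R := (ZMod p)[X]) (x := X) (y := 1) (p := p) (n := n)
  rw [this, one_pow]

lemma sigGen_pow_eq (p n : ℕ) (d : ℕ) :
    sigGen p n ^ d
      = MonoidAlgebra.single (Multiplicative.ofAdd ((d : ZMod (p ^ n)))) 1 := by
  rw [sigGen, ← map_pow, ← ofAdd_nsmul, nsmul_eq_mul, mul_one, MonoidAlgebra.of_apply]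

lemma aeval_sigGen_eq_zero (p n : ℕ) [NeZero (p ^ n)] {f : (ZMod p)[X]}
    (hdeg : f.natDegree < p ^ n) (hf : aeval (sigGen p n) f = 0) : f = 0 := by
  have expand := Polynomial.aeval_eq_sum_range' hdeg (x := sigGen p n)
  rw [hf] at expand
  have expand2 : (0 : GrpAlg p n)
      = ∑ i ∈ Finset.range (p ^ n),
          (fun i => (f.coeff i • sigGen p n ^ i : GrpAlg p n)) i :=
    expand
  have key : ∀ j < p ^ n, f.coeff j = 0 := by
    intro j hj
    have happ := congrArg (fun x : GrpAlg p n => x.coeff (Multiplicative.ofAdd ((j : ZMod (p ^ n))))) expand2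
    simp only [MonoidAlgebra.coeff_sum] at happ
    rw [Finsupp.finset_sum_apply] at happ
    have hcongr : ∀ d ∈ Finset.range (p ^ n),
        ((f.coeff d • sigGen p n ^ d : GrpAlg p n)).coeff
            (Multiplicative.ofAdd ((j : ZMod (p ^ n))))
          = if d = j then f.coeff d else 0 := by
      intro d hd
      have h1 : (f.coeff d • sigGen p n ^ d : GrpAlg p n)
          = MonoidAlgebra.single (Multiplicative.ofAdd ((d : ZMod (p ^ n)))) (f.coeff d) := by
        rw [sigGen_pow_eq]
        rw [MonoidAlgebra.smul_single, smul_eq_mul, mul_one]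
      rw [h1, MonoidAlgebra.coeff_single,
        Finsupp.single_apply]
      congr 1
      simp only [eq_iff_iff]
      constructor
      · intro h
        have h2 := Multiplicative.ofAdd.injective h
        have h3 := congrArg ZMod.val h2
        rwa [ZMod.val_natCast_of_lt (Finset.mem_range.mp hd),
          ZMod.val_natCast_of_lt hj] at h3
      · intro h; subst h; rfl
    rw [Finset.sum_congr rfl hcongr, Finset.sum_ite_eq' _ j _] at happ
    rw [if_pos (Finset.mem_range.mpr hj)] at happ
    simpa using happ.symm
  ext d
  rcases lt_or_ge d (p ^ n) with h | h
  · simpa using key d h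
  · simp [Polynomial.coeff_eq_zero_of_natDegree_lt (lt_of_lt_of_le hdeg h)]

lemma sigGen_sub_one_pow (p n : ℕ) [Fact p.Prime] : (sigGen p n - 1) ^ p ^ n = 0 := by
  rw [sub_pow_char_pow, sigGen_pow_order, one_pow, sub_self]

lemma aeval_sigGen_sub_one_ker (p n : ℕ) [Fact p.Prime] [NeZero (p ^ n)] {f : (ZMod p)[X]}
    (hf : aeval (sigGen p n - 1) f = 0) : f ∈ Ideal.span {(X : (ZMod p)[X]) ^ p ^ n} := by
  set q := p ^ n with hq
  have hmonic : ((X : (ZMod p)[X]) ^ q).Monic := monic_X_pow q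
  have hdiv := Polynomial.modByMonic_add_div f ((X : (ZMod p)[X]) ^ q)
  set r := f %ₘ ((X : (ZMod p)[X]) ^ q) with hr
  have hrdeg : r.natDegree < q := by
    rcases eq_or_ne r 0 with h0 | h0
    · rw [h0]; simpa using Nat.pos_of_ne_zero (NeZero.ne q)
    · have := Polynomial.degree_modByMonic_lt f hmonic
      rw [Polynomial.degree_X_pow] at this
      exact Polynomial.natDegree_lt_iff_degree_lt h0 |>.mpr this
  have haevalr : aeval (sigGen p n - 1) r = 0 := by
    have := congrArg (aeval (sigGen p n - 1)) hdiv
    rw [map_add, map_mul, map_pow, Polynomial.aeval_X, hq, sigGen_sub_one_pow,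
      zero_mul, add_zero] at this
    rw [this, hf]
  have hcomp : aeval (sigGen p n) (r.comp (X - 1)) = 0 := by
    rw [Polynomial.aeval_comp, map_sub, Polynomial.aeval_X, map_one, haevalr]
  have hcompdeg : (r.comp ((X : (ZMod p)[X]) - 1)).natDegree < q := by
    rcases eq_or_ne r 0 with h0 | h0
    · simpa [h0] using Nat.pos_of_ne_zero (NeZero.ne q)
    · rw [Polynomial.natDegree_comp]
      have : ((X : (ZMod p)[X]) - 1).natDegree = 1 := by
        simpa using Polynomial.natDegree_X_sub_C (1 : ZMod p)
      rw [this, mul_one]; exact hrdeg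
  have hr0 : r = 0 := by
    have hc0 := aeval_sigGen_eq_zero p n hcompdeg hcomp
    have : r.comp (((X : (ZMod p)[X]) - 1).comp (X + 1)) = 0 := by
      rw [← Polynomial.comp_assoc, hc0, Polynomial.zero_comp]
    simpa using this
  rw [← hdiv, hr0, zero_add]
  exact Ideal.mem_span_singleton.mpr ⟨f /ₘ X ^ q, rfl⟩

lemma aeval_sigGen_sub_one_surj (p n : ℕ) [NeZero (p ^ n)] :
    Function.Surjective (aeval (sigGen p n - 1) : (ZMod p)[X] →ₐ[ZMod p] GrpAlg p n) := by
  intro y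
  have hpow : ∀ d : ℕ, ∃ f : (ZMod p)[X], aeval (sigGen p n - 1) f = sigGen p n ^ d := fun d =>
    ⟨(X + 1) ^ d, by rw [map_pow, map_add, Polynomial.aeval_X, map_one, sub_add_cancel]⟩
  induction y using MonoidAlgebra.induction_on with
  | of g =>
      obtain ⟨f, hf⟩ := hpow (Multiplicative.toAdd g).val
      refine ⟨f, ?_⟩
      rw [hf, sigGen_pow_eq]
      congr 1
      rw [ZMod.natCast_val, ZMod.cast_id]
      exact (ofAdd_toAdd g).symm ▸ rfl
  | add f g hf hg =>
      obtain ⟨a, ha⟩ := hf; obtain ⟨b, hb⟩ := hg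
      exact ⟨a + b, by rw [map_add, ha, hb]⟩
  | smul r f hf =>
      obtain ⟨a, ha⟩ := hf
      exact ⟨r • a, by rw [map_smul, ha]⟩

lemma aeval_sigA_sub_one_eq (p n i : ℕ) (f : (ZMod p)[X]) :
    aeval (sigA p n i - 1) f
      = Ideal.Quotient.mk (Ideal.span {(sigGen p n - 1) ^ i}) (aeval (sigGen p n - 1) f) := by
  have := Polynomial.aeval_algHom_apply
    (Ideal.Quotient.mkₐ (ZMod p) (Ideal.span {(sigGen p n - 1) ^ i})) (sigGen p n - 1) f
  rw [map_sub, map_one, Ideal.Quotient.mkₐ_eq_mk] at this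
  rw [sigA]
  rw [← this]

lemma aeval_sigA_sub_one_surj (p n i : ℕ) [NeZero (p ^ n)] :
    Function.Surjective (aeval (sigA p n i - 1) : (ZMod p)[X] →ₐ[ZMod p] Amod p n i) := by
  intro y
  obtain ⟨z, hz⟩ := Ideal.Quotient.mk_surjective (I := Ideal.span {(sigGen p n - 1) ^ i}) y
  obtain ⟨f, hf⟩ := aeval_sigGen_sub_one_surj p n z
  exact ⟨f, by rw [aeval_sigA_sub_one_eq, hf, hz]⟩

lemma aeval_sigA_sub_one_ker (p n i : ℕ) [Fact p.Prime] [NeZero (p ^ n)] (hi : i ≤ p ^ n)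
    {f : (ZMod p)[X]} (hf : aeval (sigA p n i - 1) f = 0) :
    f ∈ Ideal.span {(X : (ZMod p)[X]) ^ i} := by
  rw [aeval_sigA_sub_one_eq, Ideal.Quotient.eq_zero_iff_mem, Ideal.mem_span_singleton] at hf
  obtain ⟨u, hu⟩ := hf
  obtain ⟨v, hv⟩ := aeval_sigGen_sub_one_surj p n u
  have h0 : aeval (sigGen p n - 1) (f - X ^ i * v) = 0 := by
    rw [map_sub, map_mul, map_pow, Polynomial.aeval_X, hv, ← hu, sub_self]
  have hmem := aeval_sigGen_sub_one_ker p n h0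
  have hXq : (X : (ZMod p)[X]) ^ p ^ n ∈ Ideal.span {(X : (ZMod p)[X]) ^ i} :=
    Ideal.mem_span_singleton.mpr ⟨X ^ (p ^ n - i), by rw [← pow_add, Nat.add_sub_cancel' hi]⟩
  have : f - X ^ i * v ∈ Ideal.span {(X : (ZMod p)[X]) ^ i} :=
    (Ideal.span_singleton_le_iff_mem _).mpr hXq hmem
  have hXiv : (X : (ZMod p)[X]) ^ i * v ∈ Ideal.span {(X : (ZMod p)[X]) ^ i} :=
    Ideal.mem_span_singleton.mpr ⟨v, rfl⟩
  simpa using add_mem this hXiv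

lemma exists_lam (p n i : ℕ) [Fact p.Prime] [NeZero (p ^ n)] (hi1 : 1 ≤ i) (hi2 : i ≤ p ^ n)
    (hpow : (sigA p n i - 1) ^ i = 0)
    (x : Amod p n i) (hx : (sigA p n i - 1) * x = 0) :
    ∃ lam : ZMod p, x = algebraMap (ZMod p) (Amod p n i) lam * (sigA p n i - 1) ^ (i - 1) := by
  obtain ⟨f, hf⟩ := aeval_sigA_sub_one_surj p n i x
  have hXf : aeval (sigA p n i - 1) (X * f) = 0 := by
    rw [map_mul, Polynomial.aeval_X, hf, hx]
  have := aeval_sigA_sub_one_ker p n i hi2 hXf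
  rw [Ideal.mem_span_singleton] at this
  obtain ⟨h, hh⟩ := this
  have hfac : (X : (ZMod p)[X]) * f = X * (X ^ (i - 1) * h) := by
    rw [← mul_assoc, ← pow_succ', Nat.sub_add_cancel hi1, hh]
  have hf2 : f = X ^ (i - 1) * h := mul_left_cancel₀ Polynomial.X_ne_zero hfac
  refine ⟨h.coeff 0, ?_⟩
  have hhdec : (X : (ZMod p)[X]) * h.divX + C (h.coeff 0) = h := Polynomial.X_mul_divX_add h
  have haeh : aeval (sigA p n i - 1) h
      = (sigA p n i - 1) * aeval (sigA p n i - 1) h.divX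
        + algebraMap (ZMod p) (Amod p n i) (h.coeff 0) := by
    rw [← hhdec]
    simp only [map_add, map_mul, Polynomial.aeval_X, Polynomial.aeval_C]
    rw [hhdec]
  rw [← hf, hf2, map_mul, map_pow, Polynomial.aeval_X, haeh, mul_add]
  have hz : (sigA p n i - 1) ^ (i - 1) * ((sigA p n i - 1) * aeval (sigA p n i - 1) h.divX) = 0 := by
    rw [← mul_assoc, ← pow_succ, Nat.sub_add_cancel hi1, hpow, zero_mul]
  rw [hz, zero_add]
  ring

lemma norm_eq (p n i : ℕ) [Fact p.Prime] :
    (sigA p n i - 1) ^ (p ^ n - 1) = ∑ j ∈ Finset.range (p ^ n), sigA p n i ^ j := by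
  have := congrArg (aeval (sigA p n i)) (geomSum p n)
  rw [map_pow, map_sub, Polynomial.aeval_X, map_one, map_sum] at this
  simpa using this


set_option linter.unusedSectionVars false
section GroupPart

variable {p n i : ℕ}

section Helpers

variable [NeZero (p ^ n)]
variable {E : Type*} [Group E] {N : Subgroup E} [N.Normal]
variable (θ : (E ⧸ N) ≃* Multiplicative (ZMod (p ^ n)))
variable (e : ↥N ≃* Multiplicative (Amod p n i))

/-- shorthand: the element of `E` corresponding to `z : A_i`. -/
noncomputable def iota (z : Amod p n i) : E := ↑(e.symm (Multiplicative.ofAdd z))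

lemma iota_mul (x y : Amod p n i) : iota e x * iota e y = iota e (x + y) := by
  rw [iota, iota, iota, ← Subgroup.coe_mul, ← map_mul, ← ofAdd_add]

lemma iota_mem (z : Amod p n i) : iota e z ∈ N := SetLike.coe_mem _

lemma iota_inj : Function.Injective (iota e : Amod p n i → E) := fun x y h => by
  have h1 : e.symm (Multiplicative.ofAdd x) = e.symm (Multiplicative.ofAdd y) :=
    Subtype.coe_injective h
  have h2 := congrArg e h1
  rw [MulEquiv.apply_symm_apply, MulEquiv.apply_symm_apply] at h2
  exact Multiplicative.ofAdd.injective h2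

variable (he : ∀ (g : E) (x : ↥N),
    Multiplicative.toAdd (e (MulAut.conjNormal g x))
      = sigA p n i ^ (Multiplicative.toAdd (θ (QuotientGroup.mk g))).val
          * Multiplicative.toAdd (e x))
variable {g : E} (hg : θ (QuotientGroup.mk g) = Multiplicative.ofAdd 1)

include hg in
lemma theta_mk_pow (k : ℕ) :
    θ (QuotientGroup.mk (g ^ k)) = Multiplicative.ofAdd ((k : ZMod (p ^ n))) := by
  rw [QuotientGroup.mk_pow, map_pow, hg, ← ofAdd_nsmul, nsmul_eq_mul, mul_one]

include he hg in
lemma conj_iota (k : ℕ) (z : Amod p n i) :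
    g ^ k * iota e z * (g ^ k)⁻¹
      = iota e (sigA p n i ^ ((k : ZMod (p ^ n))).val * z) := by
  have h := he (g ^ k) (e.symm (Multiplicative.ofAdd z))
  rw [theta_mk_pow θ hg, toAdd_ofAdd, MulEquiv.apply_symm_apply, toAdd_ofAdd] at h
  have h3 := congrArg Multiplicative.ofAdd h
  rw [ofAdd_toAdd] at h3
  have h4 := congrArg e.symm h3
  rw [MulEquiv.symm_apply_apply] at h4
  have h5 := congrArg (Subtype.val : ↥N → E) h4
  rw [MulAut.conjNormal_apply] at h5
  exact h5

include he hg in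
lemma swap_iota (k : ℕ) (z : Amod p n i) :
    g ^ k * iota e z = iota e (sigA p n i ^ ((k : ZMod (p ^ n))).val * z) * g ^ k := by
  rw [← conj_iota θ e he hg k z, inv_mul_cancel_right]

include hg in
lemma mk_iota_mul_pow (z : Amod p n i) (k : ℕ) :
    θ (QuotientGroup.mk (iota e z * g ^ k))
      = Multiplicative.ofAdd ((k : ZMod (p ^ n))) := by
  have h1 : (QuotientGroup.mk (iota e z * g ^ k) : E ⧸ N)
      = QuotientGroup.mk (iota e z) * QuotientGroup.mk (g ^ k) := rfl
  have h2 : (QuotientGroup.mk (iota e z) : E ⧸ N) = 1 :=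
    (QuotientGroup.eq_one_iff _).mpr (iota_mem e z)
  rw [h1, h2, one_mul, theta_mk_pow θ hg]

lemma pow_val_lt (j : ZMod (p ^ n)) : j.val < p ^ n := ZMod.val_lt j

lemma cast_val_val (j : ZMod (p ^ n)) : ((j.val : ZMod (p ^ n))).val = j.val := by
  rw [ZMod.natCast_val, ZMod.cast_id]

end Helpers

section Build

variable [Fact p.Prime] [NeZero (p ^ n)]
variable {E : Type*} [Group E] {N : Subgroup E} [hN : N.Normal]
variable (θ : (E ⧸ N) ≃* Multiplicative (ZMod (p ^ n)))
variable (e : ↥N ≃* Multiplicative (Amod p n i))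

set_option maxHeartbeats 1600000 in
lemma build_semi
    (he : ∀ (g : E) (x : ↥N),
        Multiplicative.toAdd (e (MulAut.conjNormal g x))
          = sigA p n i ^ (Multiplicative.toAdd (θ (QuotientGroup.mk g))).val
              * Multiplicative.toAdd (e x))
    (g : E) (hg : θ (QuotientGroup.mk g) = Multiplicative.ofAdd 1)
    (hgq : g ^ p ^ n ∈ N) (lam : ZMod p)
    (hc : Multiplicative.toAdd (e ⟨g ^ p ^ n, hgq⟩)
        = algebraMap (ZMod p) (Amod p n i) lam * ∑ k ∈ Finset.range (p ^ n), sigA p n i ^ k) :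
    Nonempty (E ≃* ASemi p n i) := by
  classical
  set c : Amod p n i := Multiplicative.toAdd (e ⟨g ^ p ^ n, hgq⟩) with hcdef
  have hgqc : g ^ p ^ n = iota e c := by
    rw [iota, hcdef, ofAdd_toAdd, MulEquiv.symm_apply_apply]
  set b : ZMod (p ^ n) → Amod p n i := fun j =>
    algebraMap (ZMod p) (Amod p n i) lam * ∑ k ∈ Finset.range j.val, sigA p n i ^ k with hbdef
  -- the cocycle identity for b
  have hbkey : ∀ j1 j2 : ZMod (p ^ n),
      b j1 + sigA p n i ^ j1.val * b j2
        = b (j1 + j2) + (if j1.val + j2.val < p ^ n then 0 else c) := by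
    intro j1 j2
    have hsum : (∑ k ∈ Finset.range j1.val, sigA p n i ^ k)
        + sigA p n i ^ j1.val * ∑ k ∈ Finset.range j2.val, sigA p n i ^ k
        = ∑ k ∈ Finset.range (j1.val + j2.val), sigA p n i ^ k := by
      rw [Finset.mul_sum, Finset.sum_range_add]
      congr 1
      refine Finset.sum_congr rfl fun k _ => ?_
      rw [← pow_add]
    rcases lt_or_ge (j1.val + j2.val) (p ^ n) with hlt | hge
    · have hval : (j1 + j2).val = j1.val + j2.val := by
        rw [ZMod.val_add, Nat.mod_eq_of_lt hlt]
      rw [if_pos hlt]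
      simp only [hbdef]
      rw [hval]
      linear_combination (algebraMap (ZMod p) (Amod p n i) lam) * hsum
    · have hval : j1.val + j2.val = p ^ n + (j1 + j2).val := by
        have h1 := ZMod.val_lt j1
        have h2 := ZMod.val_lt j2
        have : (j1 + j2).val = j1.val + j2.val - p ^ n := by
          rw [ZMod.val_add, Nat.mod_eq_sub_mod hge, Nat.mod_eq_of_lt (by omega)]
        omega
      have hsplit : ∑ k ∈ Finset.range (j1.val + j2.val), sigA p n i ^ k
          = (∑ k ∈ Finset.range (p ^ n), sigA p n i ^ k)
            + ∑ k ∈ Finset.range ((j1 + j2).val), sigA p n i ^ k := by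
        rw [hval, Finset.sum_range_add]
        congr 1
        refine Finset.sum_congr rfl fun k _ => ?_
        rw [pow_add, sigA_pow_order, one_mul]
      rw [if_neg (by omega)]
      simp only [hbdef]
      linear_combination (algebraMap (ZMod p) (Amod p n i) lam) * hsum
        + (algebraMap (ZMod p) (Amod p n i) lam) * hsplit - hc
  set Ψ : ASemi p n i → E := fun a => iota e (a.f - b a.j) * g ^ a.j.val with hΨdef
  have hmul : ∀ a b' : ASemi p n i, Ψ (a * b') = Ψ a * Ψ b' := by
    intro a b'
    rw [hΨdef]
    simp only [ASemi.mul_def]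
    have hrhs : iota e (a.f - b a.j) * g ^ a.j.val * (iota e (b'.f - b b'.j) * g ^ b'.j.val)
        = iota e ((a.f - b a.j) + sigA p n i ^ a.j.val * (b'.f - b b'.j))
            * g ^ (a.j.val + b'.j.val) := by
      rw [mul_assoc (iota e (a.f - b a.j)), ← mul_assoc (g ^ a.j.val),
        swap_iota θ e he hg, cast_val_val,
        mul_assoc (iota e (sigA p n i ^ a.j.val * (b'.f - b b'.j))), ← pow_add,
        ← mul_assoc, iota_mul]
    rw [hrhs]
    rcases lt_or_ge (a.j.val + b'.j.val) (p ^ n) with hlt | hge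
    · have hval : (a.j + b'.j).val = a.j.val + b'.j.val := by
        rw [ZMod.val_add, Nat.mod_eq_of_lt hlt]
      rw [hval]
      congr 1
      apply congrArg
      have := hbkey a.j b'.j
      rw [if_pos hlt, add_zero] at this
      linear_combination this
    · have hval : a.j.val + b'.j.val = p ^ n + (a.j + b'.j).val := by
        have h1 := ZMod.val_lt a.j
        have h2 := ZMod.val_lt b'.j
        have : (a.j + b'.j).val = a.j.val + b'.j.val - p ^ n := by
          rw [ZMod.val_add, Nat.mod_eq_sub_mod hge, Nat.mod_eq_of_lt (by omega)]
        omega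
      rw [hval, pow_add, hgqc, ← mul_assoc, iota_mul]
      congr 1
      apply congrArg
      have := hbkey a.j b'.j
      rw [if_neg (by omega)] at this
      linear_combination this
  have hinj : Function.Injective Ψ := by
    intro a1 a2 h12
    have hj : a1.j = a2.j := by
      have h1 := congrArg (fun x : E => θ (QuotientGroup.mk x)) h12
      simp only [hΨdef] at h1
      rw [mk_iota_mul_pow θ e hg, mk_iota_mul_pow θ e hg] at h1
      have h2 := congrArg Multiplicative.toAdd h1
      rw [toAdd_ofAdd, toAdd_ofAdd] at h2
      have h3 := congrArg ZMod.val h2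
      rw [cast_val_val, cast_val_val] at h3
      exact ZMod.val_injective _ h3
    have hf : a1.f = a2.f := by
      rw [hΨdef] at h12
      simp only [] at h12
      rw [hj] at h12
      have h4 : iota e (a1.f - b a2.j) = iota e (a2.f - b a2.j) :=
        mul_right_cancel h12
      have h5 := iota_inj e h4
      linear_combination h5
    exact ASemi.ext hf hj
  have hsurj : Function.Surjective Ψ := by
    intro x
    set j : ZMod (p ^ n) := Multiplicative.toAdd (θ (QuotientGroup.mk x)) with hjdef
    have hmem : x * (g ^ j.val)⁻¹ ∈ N := by
      rw [← QuotientGroup.eq_one_iff]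
      apply θ.injective
      have h1 : (QuotientGroup.mk (x * (g ^ j.val)⁻¹) : E ⧸ N)
          = QuotientGroup.mk x * (QuotientGroup.mk (g ^ j.val))⁻¹ := rfl
      rw [h1, map_mul, map_inv, theta_mk_pow θ hg, map_one, ZMod.natCast_val,
        ZMod.cast_id, hjdef, ofAdd_toAdd]
      exact mul_inv_cancel _
    refine ⟨⟨Multiplicative.toAdd (e ⟨x * (g ^ j.val)⁻¹, hmem⟩) + b j, j⟩, ?_⟩
    simp only [hΨdef, add_sub_cancel_right]
    have h6 : iota e (Multiplicative.toAdd (e ⟨x * (g ^ j.val)⁻¹, hmem⟩))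
        = x * (g ^ j.val)⁻¹ := by
      rw [iota, ofAdd_toAdd, MulEquiv.symm_apply_apply]
    rw [h6, inv_mul_cancel_right]
  exact ⟨(MulEquiv.ofBijective (MonoidHom.mk' Ψ (fun a b' => hmul a b')) ⟨hinj, hsurj⟩).symm⟩

set_option maxHeartbeats 1600000 in
lemma build_bull (hii : 1 ≤ i)
    (he : ∀ (g : E) (x : ↥N),
        Multiplicative.toAdd (e (MulAut.conjNormal g x))
          = sigA p n i ^ (Multiplicative.toAdd (θ (QuotientGroup.mk g))).val
              * Multiplicative.toAdd (e x))
    (g : E) (hg : θ (QuotientGroup.mk g) = Multiplicative.ofAdd 1)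
    (hgq : g ^ p ^ n ∈ N) (lam : ZMod p) (hlam : lam ≠ 0)
    (hc : Multiplicative.toAdd (e ⟨g ^ p ^ n, hgq⟩)
        = algebraMap (ZMod p) (Amod p n i) lam * (sigA p n i - 1) ^ (i - 1)) :
    Nonempty (E ≃* ABull p n i) := by
  classical
  set μ : Amod p n i := algebraMap (ZMod p) (Amod p n i) lam with hμdef
  have hμcancel : ∀ x y : Amod p n i, μ * x = μ * y → x = y := by
    intro x y hxy
    have h2 := congrArg (fun z => algebraMap (ZMod p) (Amod p n i) lam⁻¹ * z) hxy
    simp only [hμdef, ← mul_assoc, ← map_mul, inv_mul_cancel₀ hlam, map_one, one_mul] at h2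
    exact h2
  set c : Amod p n i := Multiplicative.toAdd (e ⟨g ^ p ^ n, hgq⟩) with hcdef
  have hgqc : g ^ p ^ n = iota e c := by
    rw [iota, hcdef, ofAdd_toAdd, MulEquiv.symm_apply_apply]
  set Ψ : ABull p n i → E := fun a => iota e (μ * a.f) * g ^ a.j.val with hΨdef
  have hmul : ∀ a b' : ABull p n i, Ψ (a * b') = Ψ a * Ψ b' := by
    intro a b'
    simp only [hΨdef, ABull.mul_def]
    have hrhs : iota e (μ * a.f) * g ^ a.j.val * (iota e (μ * b'.f) * g ^ b'.j.val)
        = iota e (μ * a.f + sigA p n i ^ a.j.val * (μ * b'.f))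
            * g ^ (a.j.val + b'.j.val) := by
      rw [mul_assoc (iota e (μ * a.f)), ← mul_assoc (g ^ a.j.val),
        swap_iota θ e he hg, cast_val_val,
        mul_assoc (iota e (sigA p n i ^ a.j.val * (μ * b'.f))), ← pow_add,
        ← mul_assoc, iota_mul]
    rw [hrhs]
    rcases lt_or_ge (a.j.val + b'.j.val) (p ^ n) with hlt | hge
    · have hval : (a.j + b'.j).val = a.j.val + b'.j.val := by
        rw [ZMod.val_add, Nat.mod_eq_of_lt hlt]
      rw [if_pos hlt, hval]
      congr 1
      apply congrArg
      ring
    · have hval : a.j.val + b'.j.val = p ^ n + (a.j + b'.j).val := by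
        have h1 := ZMod.val_lt a.j
        have h2 := ZMod.val_lt b'.j
        have : (a.j + b'.j).val = a.j.val + b'.j.val - p ^ n := by
          rw [ZMod.val_add, Nat.mod_eq_sub_mod hge, Nat.mod_eq_of_lt (by omega)]
        omega
      rw [if_neg (by omega), hval, pow_add, hgqc, ← mul_assoc, iota_mul]
      congr 1
      apply congrArg
      rw [hc]
      ring
  have hinj : Function.Injective Ψ := by
    intro a1 a2 h12
    have hj : a1.j = a2.j := by
      have h1 := congrArg (fun x : E => θ (QuotientGroup.mk x)) h12
      simp only [hΨdef] at h1
      rw [mk_iota_mul_pow θ e hg, mk_iota_mul_pow θ e hg] at h1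
      have h2 := congrArg Multiplicative.toAdd h1
      rw [toAdd_ofAdd, toAdd_ofAdd] at h2
      have h3 := congrArg ZMod.val h2
      rw [cast_val_val, cast_val_val] at h3
      exact ZMod.val_injective _ h3
    have hf : a1.f = a2.f := by
      simp only [hΨdef] at h12
      rw [hj] at h12
      have h4 : iota e (μ * a1.f) = iota e (μ * a2.f) := mul_right_cancel h12
      exact hμcancel _ _ (iota_inj e h4)
    exact ABull.ext hf hj
  have hsurj : Function.Surjective Ψ := by
    intro x
    set j : ZMod (p ^ n) := Multiplicative.toAdd (θ (QuotientGroup.mk x)) with hjdef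
    have hmem : x * (g ^ j.val)⁻¹ ∈ N := by
      rw [← QuotientGroup.eq_one_iff]
      apply θ.injective
      have h1 : (QuotientGroup.mk (x * (g ^ j.val)⁻¹) : E ⧸ N)
          = QuotientGroup.mk x * (QuotientGroup.mk (g ^ j.val))⁻¹ := rfl
      rw [h1, map_mul, map_inv, theta_mk_pow θ hg, map_one, ZMod.natCast_val,
        ZMod.cast_id, hjdef, ofAdd_toAdd]
      exact mul_inv_cancel _
    refine ⟨⟨algebraMap (ZMod p) (Amod p n i) lam⁻¹
        * Multiplicative.toAdd (e ⟨x * (g ^ j.val)⁻¹, hmem⟩), j⟩, ?_⟩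
    simp only [hΨdef]
    have hval : μ * (algebraMap (ZMod p) (Amod p n i) lam⁻¹
        * Multiplicative.toAdd (e ⟨x * (g ^ j.val)⁻¹, hmem⟩))
        = Multiplicative.toAdd (e ⟨x * (g ^ j.val)⁻¹, hmem⟩) := by
      rw [hμdef, ← mul_assoc, ← map_mul, mul_inv_cancel₀ hlam, map_one, one_mul]
    rw [hval]
    have h6 : iota e (Multiplicative.toAdd (e ⟨x * (g ^ j.val)⁻¹, hmem⟩))
        = x * (g ^ j.val)⁻¹ := by
      rw [iota, ofAdd_toAdd, MulEquiv.symm_apply_apply]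
    rw [h6, inv_mul_cancel_right]
  exact ⟨(MulEquiv.ofBijective (MonoidHom.mk' Ψ (fun a b' => hmul a b')) ⟨hinj, hsurj⟩).symm⟩

end Build


end GroupPart

/-- (Prop. 3.4, Waterhouse) **Classification of extensions of `ℤ/pⁿℤ` by a cyclic
`𝔽_p[ℤ/pⁿℤ]`-module.**  Let `E` be a finite group with a normal subgroup `N` that is an
elementary abelian `p`-group, such that `E/N` is cyclic of order `pⁿ` (via a fixed
isomorphism `θ : E/N ≅ G_n`), and such that the conjugation action of `E/N` on `N` makes
`N` isomorphic to `A_i` as an `𝔽_p[G_n]`-module (witnessed by `e`, which intertwines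
conjugation by `g` with multiplication by `σ^j` where `θ(gN) = σ^j`).  If `i = pⁿ`, then
`E ≅ A_{pⁿ} ⋊ G_n`; if `1 ≤ i < pⁿ`, then `E ≅ A_i ⋊ G_n` or `E ≅ A_i • G_n`. -/
theorem classification_of_cyclic_module_extensions
    (p n : ℕ) [Fact p.Prime] (hodd : Odd p) (hn : 1 ≤ n)
    (E : Type*) [Group E] [Finite E]
    (N : Subgroup E) [hN : N.Normal]
    (helem : ∀ x ∈ N, x ^ p = 1)
    (θ : (E ⧸ N) ≃* Multiplicative (ZMod (p ^ n)))
    (i : ℕ) (hi1 : 1 ≤ i) (hi2 : i ≤ p ^ n)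
    (e : ↥N ≃* Multiplicative (Amod p n i))
    (he : ∀ (g : E) (x : ↥N),
        Multiplicative.toAdd (e (MulAut.conjNormal g x))
          = sigA p n i ^ (Multiplicative.toAdd (θ (QuotientGroup.mk g))).val
              * Multiplicative.toAdd (e x)) :
    (i = p ^ n → Nonempty (E ≃* ASemi p n i)) ∧
    (i < p ^ n → (Nonempty (E ≃* ASemi p n i) ∨ Nonempty (E ≃* ABull p n i))) := by
  haveI : NeZero (p ^ n) := ⟨pow_ne_zero n (Fact.out : p.Prime).ne_zero⟩
  haveI : Fact (1 < p ^ n) := ⟨Nat.one_lt_pow (by omega) (Fact.out : p.Prime).one_lt⟩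
  obtain ⟨g, hg'⟩ := QuotientGroup.mk_surjective (θ.symm (Multiplicative.ofAdd 1))
  have hg : θ (QuotientGroup.mk g) = Multiplicative.ofAdd 1 := by
    rw [hg', MulEquiv.apply_symm_apply]
  have hgq : g ^ p ^ n ∈ N := by
    rw [← QuotientGroup.eq_one_iff]
    apply θ.injective
    rw [theta_mk_pow θ hg, map_one, ZMod.natCast_self, ofAdd_zero]
  set c := Multiplicative.toAdd (e ⟨g ^ p ^ n, hgq⟩) with hcdef
  have hfix : MulAut.conjNormal g (⟨g ^ p ^ n, hgq⟩ : ↥N) = ⟨g ^ p ^ n, hgq⟩ := by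
    apply Subtype.ext
    rw [MulAut.conjNormal_apply]
    have hcomm : g * g ^ p ^ n = g ^ p ^ n * g := ((Commute.refl g).pow_right _).eq
    rw [hcomm, mul_inv_cancel_right]
  have hsc : sigA p n i * c = c := by
    have h := he g ⟨g ^ p ^ n, hgq⟩
    rw [hfix, hg, toAdd_ofAdd, ZMod.val_one, pow_one, ← hcdef] at h
    exact h.symm
  have hann : (sigA p n i - 1) * c = 0 := by linear_combination hsc
  obtain ⟨lam, hlam⟩ := exists_lam p n i hi1 hi2 (sigA_sub_one_pow_self p n i) c hann
  constructor
  · intro hiq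
    subst hiq
    refine build_semi θ e he g hg hgq lam ?_
    rw [← hcdef, hlam, norm_eq]
  · intro hilt
    by_cases hl0 : lam = 0
    · left
      refine build_semi θ e he g hg hgq 0 ?_
      rw [← hcdef, hlam, hl0, map_zero, zero_mul, zero_mul]
    · right
      exact build_bull θ e hi1 he g hg hgq lam hl0 (by rw [← hcdef, hlam])
end

section
/- Let p be an odd prime and n ≥ 1. (i) If p^{n−1}+2 ≤ i ≤ pⁿ and N is a normal subgroup of A_i ⋊ G_n such that N is an elementary abelian p-group and (A_i ⋊ G_n)/N is cyclic of order pⁿ, then N = A_i × {1}. (ii) If p^{n−1}+1 ≤ i < pⁿ and N is a normal subgroup of A_i • G_n such that N is an elementary abelian p-group and (A_i • G_n)/N is cyclic of order pⁿ, then N = A_i × {1}. Consequently, a Galois extension L/F with group A_i ⋊ G_n (resp. A_i • G_n) in these ranges has a unique intermediate ℤ/pⁿℤ-extension K/F such that L/K is elementary p-abelian. -/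
open Polynomial

section AuxRing
open Polynomial

/-- model ring 𝔽_p[X]/(X^i) -/
abbrev PRing (p i : ℕ) : Type := Polynomial (ZMod p) ⧸ Ideal.span {(X : Polynomial (ZMod p)) ^ i}

noncomputable def pmk (p i : ℕ) : Polynomial (ZMod p) →+* PRing p i :=
  Ideal.Quotient.mk _

lemma pmk_X_pow_eq_zero (p : ℕ) {i m : ℕ} (h : i ≤ m) : pmk p i (X ^ m) = 0 := by
  rw [pmk, Ideal.Quotient.eq_zero_iff_mem, Ideal.mem_span_singleton]
  exact pow_dvd_pow X h

lemma pmk_eq_zero_iff (p i : ℕ) (f : Polynomial (ZMod p)) :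
    pmk p i f = 0 ↔ (X : Polynomial (ZMod p)) ^ i ∣ f := by
  rw [pmk, Ideal.Quotient.eq_zero_iff_mem, Ideal.mem_span_singleton]

noncomputable def uP (p i : ℕ) : PRing p i := pmk p i (1 + X)

lemma uP_pow_order (p n i : ℕ) [Fact p.Prime] (hi : i ≤ p ^ n) : uP p i ^ p ^ n = 1 := by
  rw [uP, ← map_pow, add_pow_char_pow, one_pow, map_add, map_one,
    pmk_X_pow_eq_zero p hi, add_zero]

noncomputable def chiP (p n i : ℕ) [Fact p.Prime] [NeZero (p ^ n)] (hi : i ≤ p ^ n) :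
    Multiplicative (ZMod (p ^ n)) →* PRing p i where
  toFun g := uP p i ^ (Multiplicative.toAdd g).val
  map_one' := by
    show uP p i ^ (0 : ZMod (p ^ n)).val = 1
    rw [ZMod.val_zero, pow_zero]
  map_mul' a b := by
    show uP p i ^ (Multiplicative.toAdd a + Multiplicative.toAdd b).val = _
    rw [ZMod.val_add, ← pow_add]
    exact (pow_eq_pow_mod _ (uP_pow_order p n i hi)).symm

noncomputable def PhiA (p n i : ℕ) [Fact p.Prime] [NeZero (p ^ n)] (hi : i ≤ p ^ n) :
    GrpAlg p n →ₐ[ZMod p] PRing p i :=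
  MonoidAlgebra.lift _ _ _ (chiP p n i hi)

lemma PhiA_sigGen (p n i : ℕ) [Fact p.Prime] [NeZero (p ^ n)] [Fact (1 < p ^ n)]
    (hi : i ≤ p ^ n) : PhiA p n i hi (sigGen p n) = uP p i := by
  rw [sigGen, PhiA, MonoidAlgebra.lift_of]
  show uP p i ^ (1 : ZMod (p ^ n)).val = uP p i
  rw [ZMod.val_one, pow_one]

lemma PhiA_T (p n i : ℕ) [Fact p.Prime] [NeZero (p ^ n)] [Fact (1 < p ^ n)]
    (hi : i ≤ p ^ n) : PhiA p n i hi (sigGen p n - 1) = pmk p i X := by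
  rw [map_sub, map_one, PhiA_sigGen p n i hi, uP, ← map_one (pmk p i), ← map_sub]
  congr 1
  ring

noncomputable def PhiB (p n i : ℕ) [Fact p.Prime] [NeZero (p ^ n)] [Fact (1 < p ^ n)]
    (hi : i ≤ p ^ n) : Amod p n i →+* PRing p i :=
  Ideal.Quotient.lift _ (PhiA p n i hi).toRingHom (by
    intro a ha
    rw [Ideal.mem_span_singleton] at ha
    obtain ⟨g, rfl⟩ := ha
    show PhiA p n i hi _ = 0
    rw [map_mul, map_pow, PhiA_T p n i hi, ← map_pow, pmk_X_pow_eq_zero p le_rfl, zero_mul])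

lemma PhiB_mk (p n i : ℕ) [Fact p.Prime] [NeZero (p ^ n)] [Fact (1 < p ^ n)]
    (hi : i ≤ p ^ n) (a : GrpAlg p n) :
    PhiB p n i hi (Ideal.Quotient.mk _ a) = PhiA p n i hi a := rfl

lemma PhiB_sigA (p n i : ℕ) [Fact p.Prime] [NeZero (p ^ n)] [Fact (1 < p ^ n)]
    (hi : i ≤ p ^ n) : PhiB p n i hi (sigA p n i) = uP p i := by
  rw [sigA, PhiB_mk, PhiA_sigGen]

lemma PhiB_t (p n i : ℕ) [Fact p.Prime] [NeZero (p ^ n)] [Fact (1 < p ^ n)]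
    (hi : i ≤ p ^ n) : PhiB p n i hi (sigA p n i - 1) = pmk p i X := by
  rw [map_sub, map_one, PhiB_sigA p n i hi, uP, ← map_one (pmk p i), ← map_sub]
  congr 1
  ring

lemma PRing_p_eq_zero (p i : ℕ) [Fact p.Prime] : (p : PRing p i) = 0 := by
  rw [← map_natCast (pmk p i) p, ← map_natCast (C : ZMod p →+* Polynomial (ZMod p)) p,
    ZMod.natCast_self, map_zero, map_zero]

end AuxRing

section AuxLemmas
open Polynomial

lemma one_add_pow_sq {R : Type*} [CommRing R] (x : R) (c : ℕ) :
    ∃ s : R, (1 + x) ^ c = 1 + (c : R) * x + x ^ 2 * s := by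
  induction c with
  | zero => exact ⟨0, by push_cast; ring⟩
  | succ m ih =>
    obtain ⟨s, hs⟩ := ih
    refine ⟨s + (m : R) + x * s, ?_⟩
    rw [pow_succ, hs]
    push_cast
    ring

lemma not_p_dvd (p c : ℕ) [Fact p.Prime] (hc0 : 0 < c) (hcp : c < p) :
    (c : ZMod p) ≠ 0 := by
  intro h
  rw [ZMod.natCast_eq_zero_iff] at h
  exact absurd (Nat.le_of_dvd hc0 h) (by omega)

lemma key_contra (p n i : ℕ) [Fact p.Prime] [NeZero (p ^ n)] [Fact (1 < p ^ n)]
    (c : ℕ) (hc0 : 0 < c) (hcp : c < p)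
    (hi : p ^ (n - 1) + 1 < i) (hi2 : i ≤ p ^ n)
    (h : (sigA p n i ^ (c * p ^ (n - 1)) - 1) * (sigA p n i - 1) = 0) : False := by
  set q := p ^ (n - 1) with hq
  have hq1 : 1 ≤ q := Nat.one_le_pow _ _ (Fact.out : p.Prime).pos
  have h2 := congrArg (PhiB p n i hi2) h
  rw [map_mul, map_sub, map_pow, map_one, PhiB_sigA p n i hi2, PhiB_t p n i hi2, map_zero] at h2
  -- uP ^ (c*q) = pmk ((1+X)^(c*q)) = pmk ((1+X^q)^c)
  have hu : uP p i ^ (c * q) = pmk p i ((1 + X ^ q) ^ c) := by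
    rw [uP, ← map_pow, mul_comm c q, pow_mul, add_pow_char_pow, one_pow]
  rw [hu] at h2
  obtain ⟨s, hs⟩ := one_add_pow_sq (X ^ q : Polynomial (ZMod p)) c
  rw [hs] at h2
  have h3 : pmk p i ((1 + (c : Polynomial (ZMod p)) * X ^ q + (X ^ q) ^ 2 * s - 1) * X) = 0 := by
    rw [map_mul, map_sub, map_one]
    exact h2
  rw [pmk_eq_zero_iff] at h3
  obtain ⟨g, hg⟩ := h3
  have hco := congrArg (fun f => Polynomial.coeff f (q + 1)) hg
  have hlhs : ((1 + (c : Polynomial (ZMod p)) * X ^ q + (X ^ q) ^ 2 * s - 1) * X).coeff (q + 1)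
      = (c : ZMod p) := by
    have : (1 + (c : Polynomial (ZMod p)) * X ^ q + (X ^ q) ^ 2 * s - 1) * X
        = (c : Polynomial (ZMod p)) * X ^ (q + 1) + s * X ^ (2 * q + 1) := by
      ring
    rw [this, Polynomial.coeff_add, ← Polynomial.C_eq_natCast, Polynomial.coeff_C_mul,
      Polynomial.coeff_X_pow, if_pos rfl, Polynomial.coeff_mul_X_pow']
    rw [if_neg (by omega)]
    ring
  have hrhs : ((X : Polynomial (ZMod p)) ^ i * g).coeff (q + 1) = 0 := by
    rw [mul_comm, Polynomial.coeff_mul_X_pow', if_neg (by omega)]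
  rw [hlhs, hrhs] at hco
  exact not_p_dvd p c hc0 hcp hco

lemma val_decomp (p n : ℕ) [Fact p.Prime] [NeZero (p ^ n)] (hn : 1 ≤ n)
    (j : ZMod (p ^ n)) (hj : j ≠ 0) (hpj : (p : ZMod (p ^ n)) * j = 0) :
    ∃ c : ℕ, 0 < c ∧ c < p ∧ j.val = c * p ^ (n - 1) := by
  have hp := (Fact.out : p.Prime).pos
  have hcast : ((p * j.val : ℕ) : ZMod (p ^ n)) = 0 := by
    push_cast
    rw [ZMod.natCast_val, ZMod.cast_id, hpj]
  rw [ZMod.natCast_eq_zero_iff] at hcast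
  have hpn : p ^ n = p * p ^ (n - 1) := by
    rw [← pow_succ']
    congr 1
    omega
  have hcast2 : p * p ^ (n - 1) ∣ p * j.val := by rw [← hpn]; exact hcast
  have hdvd : p ^ (n - 1) ∣ j.val := (mul_dvd_mul_iff_left (by omega : p ≠ 0)).mp hcast2
  obtain ⟨c, hc⟩ := hdvd
  refine ⟨c, ?_, ?_, by rw [hc]; ring⟩
  · rcases Nat.eq_zero_or_pos c with rfl | h
    · exact absurd ((ZMod.val_eq_zero j).mp (by omega)) hj
    · exact h
  · have hv := ZMod.val_lt j
    rw [hc] at hv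
    rw [hpn, mul_comm p] at hv
    exact Nat.lt_of_mul_lt_mul_left hv

lemma geom_sum_sq_zero {R : Type*} [CommRing R] (p : ℕ) (w : R)
    (hw : w * w = 0) (h0 : (p : R) = 0) (hdvd : p ∣ ∑ m ∈ Finset.range p, m) :
    ∑ m ∈ Finset.range p, (1 + w) ^ m = 0 := by
  have hpow : ∀ m : ℕ, (1 + w) ^ m = 1 + (m : R) * w := by
    intro m
    induction m with
    | zero => push_cast; ring
    | succ k ih =>
      rw [pow_succ, ih]
      push_cast
      linear_combination (k : R) * hw
  calc ∑ m ∈ Finset.range p, (1 + w) ^ m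
      = ∑ m ∈ Finset.range p, (1 + (m : R) * w) := by
        exact Finset.sum_congr rfl fun m _ => hpow m
    _ = (p : R) + ((∑ m ∈ Finset.range p, m : ℕ) : R) * w := by
        rw [Finset.sum_add_distrib, Finset.sum_const, Finset.card_range]
        push_cast
        rw [Finset.sum_mul]
        simp
    _ = 0 := by
        obtain ⟨d, hd⟩ := hdvd
        rw [h0, hd]
        push_cast
        rw [h0]
        ring

lemma p_dvd_gauss (p : ℕ) (hodd : Odd p) : p ∣ ∑ m ∈ Finset.range p, m := by
  obtain ⟨k, hk⟩ := hodd
  have h2 := Finset.sum_range_id_mul_two p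
  have hp1 : p - 1 = 2 * k := by omega
  have h3 : (∑ m ∈ Finset.range p, m) * 2 = p * k * 2 := by rw [h2, hp1]; ring
  exact ⟨k, Nat.eq_of_mul_eq_mul_right (by norm_num) h3⟩

end AuxLemmas
section AuxGroup
variable {p n i : ℕ}

lemma ASemi.pow_j [NeZero (p ^ n)] (x : ASemi p n i) (k : ℕ) :
    (x ^ k).j = (k : ZMod (p ^ n)) * x.j := by
  induction k with
  | zero =>
    show (0 : ZMod (p ^ n)) = _
    push_cast
    ring
  | succ m ih =>
    rw [pow_succ]
    show (x ^ m).j + x.j = _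
    rw [ih]
    push_cast
    ring

lemma ABull.pow_j [NeZero (p ^ n)] (x : ABull p n i) (k : ℕ) :
    (x ^ k).j = (k : ZMod (p ^ n)) * x.j := by
  induction k with
  | zero =>
    show (0 : ZMod (p ^ n)) = _
    push_cast
    ring
  | succ m ih =>
    rw [pow_succ]
    show (x ^ m).j + x.j = _
    rw [ih]
    push_cast
    ring

lemma commutator_mem_of_cyclic {G : Type*} [Group G] (N : Subgroup G) [N.Normal]
    (hc : IsCyclic (G ⧸ N)) (g h : G) : g * h * g⁻¹ * h⁻¹ ∈ N := by
  obtain ⟨z, hz⟩ := hc.exists_generator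
  obtain ⟨m, hm⟩ := hz ((g : G) : G ⧸ N)
  obtain ⟨k, hk⟩ := hz ((h : G) : G ⧸ N)
  rw [← QuotientGroup.eq_one_iff]
  have : ((g * h * g⁻¹ * h⁻¹ : G) : G ⧸ N)
      = ((g : G ⧸ N)) * ((h : G ⧸ N)) * ((g : G ⧸ N))⁻¹ * ((h : G ⧸ N))⁻¹ := rfl
  rw [this, ← hm, ← hk, ← zpow_neg, ← zpow_neg, ← zpow_add, ← zpow_add, ← zpow_add]
  rw [show m + k + -m + -k = 0 by ring, zpow_zero]

lemma ASemi.pow_f (x : ASemi p n i) (k : ℕ) [NeZero (p ^ n)] :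
    (x ^ k).f = (∑ m ∈ Finset.range k, sigA p n i ^ ((m : ZMod (p ^ n)) * x.j).val) * x.f := by
  induction k with
  | zero =>
    show (0 : Amod p n i) = _
    simp
  | succ m ih =>
    rw [pow_succ]
    show (x ^ m).f + sigA p n i ^ (x ^ m).j.val * x.f = _
    rw [ih, ASemi.pow_j, Finset.sum_range_succ, add_mul]

lemma ABull.pow_f (x : ABull p n i) (k : ℕ) [NeZero (p ^ n)] :
    (x ^ k).f = (∑ m ∈ Finset.range k, sigA p n i ^ ((m : ZMod (p ^ n)) * x.j).val) * x.f
      + ∑ m ∈ Finset.range k,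
          (if ((m : ZMod (p ^ n)) * x.j).val + x.j.val < p ^ n then (0 : Amod p n i)
            else (sigA p n i - 1) ^ (i - 1)) := by
  induction k with
  | zero =>
    show (0 : Amod p n i) = _
    simp
  | succ m ih =>
    rw [pow_succ]
    show (x ^ m).f + sigA p n i ^ (x ^ m).j.val * x.f
        + (if (x ^ m).j.val + x.j.val < p ^ n then (0 : Amod p n i)
            else (sigA p n i - 1) ^ (i - 1)) = _
    rw [ih, ABull.pow_j, Finset.sum_range_succ, Finset.sum_range_succ, add_mul]
    ring

end AuxGroup
section AuxGroup2
variable {p n i : ℕ}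

lemma ASemi.tA_mem [NeZero (p ^ n)] [Fact (1 < p ^ n)] (N : Subgroup (ASemi p n i)) [N.Normal]
    (hcyc : IsCyclic (ASemi p n i ⧸ N)) :
    (⟨sigA p n i - 1, 0⟩ : ASemi p n i) ∈ N := by
  have h := commutator_mem_of_cyclic N hcyc ⟨0, 1⟩ ⟨1, 0⟩
  have e : (⟨0, 1⟩ * ⟨1, 0⟩ * (⟨0, 1⟩ : ASemi p n i)⁻¹ * (⟨1, 0⟩ : ASemi p n i)⁻¹)
      = (⟨sigA p n i - 1, 0⟩ : ASemi p n i) := by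
    rw [ASemi.inv_def, ASemi.inv_def]
    rw [ASemi.mul_def, ASemi.mul_def, ASemi.mul_def]
    ext
    · show (0 : Amod p n i) + sigA p n i ^ (1 : ZMod (p ^ n)).val * 1
          + sigA p n i ^ ((1 : ZMod (p ^ n)) + 0).val *
            (-(sigA p n i ^ (-(1 : ZMod (p ^ n))).val * (0 : Amod p n i)))
          + sigA p n i ^ ((1 : ZMod (p ^ n)) + 0 + -1).val *
            (-(sigA p n i ^ (-(0 : ZMod (p ^ n))).val * 1))
        = sigA p n i - 1
      rw [ZMod.val_one, neg_zero, ZMod.val_zero]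
      ring_nf
      simp only [ZMod.val_zero, pow_zero]
      ring
    · show (1 : ZMod (p ^ n)) + 0 + -1 + -0 = 0
      ring
  rwa [e] at h

lemma ABull.tA_mem [NeZero (p ^ n)] [Fact (1 < p ^ n)] (N : Subgroup (ABull p n i)) [N.Normal]
    (hcyc : IsCyclic (ABull p n i ⧸ N)) :
    (⟨sigA p n i - 1, 0⟩ : ABull p n i) ∈ N := by
  have h := commutator_mem_of_cyclic N hcyc ⟨0, 1⟩ ⟨1, 0⟩
  have h1 : (1 : ZMod (p ^ n)) ≠ 0 := by
    have : (1 : ZMod (p ^ n)).val = 1 := ZMod.val_one _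
    intro hx
    rw [hx, ZMod.val_zero] at this
    omega
  have e : (⟨0, 1⟩ * ⟨1, 0⟩ * (⟨0, 1⟩ : ABull p n i)⁻¹ * (⟨1, 0⟩ : ABull p n i)⁻¹)
      = (⟨sigA p n i - 1, 0⟩ : ABull p n i) := by
    rw [ABull.inv_def, ABull.inv_def]
    rw [ABull.mul_def, ABull.mul_def, ABull.mul_def]
    have hv1 : (1 : ZMod (p ^ n)).val = 1 := ZMod.val_one _
    have hvm1 : (-1 : ZMod (p ^ n)).val = p ^ n - 1 := by
      rw [ZMod.neg_val, if_neg h1, hv1]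
    have hord := sigA_pow_order p n i
    have hpn : 1 < p ^ n := Fact.out
    ext
    · show (0 : Amod p n i) + sigA p n i ^ (1 : ZMod (p ^ n)).val * 1
          + (if (1 : ZMod (p ^ n)).val + (0 : ZMod (p ^ n)).val < p ^ n then 0 else _)
          + sigA p n i ^ ((1 : ZMod (p ^ n)) + 0).val *
            (-(sigA p n i ^ (-(1 : ZMod (p ^ n))).val *
              ((0 : Amod p n i) + if (1 : ZMod (p ^ n)) = 0 then 0 else (sigA p n i - 1) ^ (i - 1))))
          + (if ((1 : ZMod (p ^ n)) + 0).val + (-(1 : ZMod (p ^ n))).val < p ^ n then 0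
              else (sigA p n i - 1) ^ (i - 1))
          + sigA p n i ^ ((1 : ZMod (p ^ n)) + 0 + -1).val *
            (-(sigA p n i ^ (-(0 : ZMod (p ^ n))).val *
              ((1 : Amod p n i) + if (0 : ZMod (p ^ n)) = 0 then 0 else (sigA p n i - 1) ^ (i - 1))))
          + (if ((1 : ZMod (p ^ n)) + 0 + -1).val + (-(0 : ZMod (p ^ n))).val < p ^ n then 0
              else (sigA p n i - 1) ^ (i - 1))
        = sigA p n i - 1
      rw [if_neg h1, if_pos rfl, add_zero, add_neg_cancel, neg_zero]
      rw [hv1, hvm1, ZMod.val_zero, if_pos (by omega), if_neg (by omega), if_pos (by omega)]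
      simp only [pow_zero, pow_one]
      have hmul : sigA p n i * (sigA p n i ^ (p ^ n - 1) * (sigA p n i - 1) ^ (i - 1))
          = (sigA p n i - 1) ^ (i - 1) := by
        rw [← mul_assoc, ← pow_succ', Nat.sub_add_cancel (by omega : 1 ≤ p ^ n), hord, one_mul]
      linear_combination -hmul
    · show (1 : ZMod (p ^ n)) + 0 + -1 + -0 = 0
      ring
  rwa [e] at h

end AuxGroup2
section AuxCount

lemma carry_count (p n : ℕ) [Fact p.Prime] [NeZero (p ^ n)] (hn : 1 ≤ n)
    (j : ZMod (p ^ n)) (c : ℕ) (hval : j.val = c * p ^ (n - 1))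
    (hpj : (p : ZMod (p ^ n)) * j = 0) :
    (∑ m ∈ Finset.range p, if ((m : ZMod (p ^ n)) * j).val + j.val < p ^ n then 0 else 1) * p ^ n
      = c * p ^ n := by
  have hp := (Fact.out : p.Prime).pos
  set g : ℕ → ℕ := fun m => ((m : ZMod (p ^ n)) * j).val with hg
  have hstep : ∀ m : ℕ, g m + j.val
      = g (m + 1) + (if g m + j.val < p ^ n then 0 else 1) * p ^ n := by
    intro m
    have h1 : g (m + 1) = (g m + j.val) % p ^ n := by
      rw [hg]
      simp only
      rw [← ZMod.val_add]
      congr 1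
      push_cast
      ring
    have h2 : g m < p ^ n := ZMod.val_lt _
    have h3 : j.val < p ^ n := ZMod.val_lt _
    split_ifs with h
    · rw [h1, Nat.mod_eq_of_lt h]
      omega
    · have h4 : (g m + j.val) % p ^ n = g m + j.val - p ^ n := by
        rw [Nat.mod_eq_sub_mod (by omega), Nat.mod_eq_of_lt (by omega)]
      omega
  have hsum : ∑ m ∈ Finset.range p, (g m + j.val)
      = ∑ m ∈ Finset.range p, (g (m + 1) + (if g m + j.val < p ^ n then 0 else 1) * p ^ n) :=
    Finset.sum_congr rfl fun m _ => hstep m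
  rw [Finset.sum_add_distrib, Finset.sum_add_distrib, Finset.sum_const, Finset.card_range] at hsum
  have hshift : ∑ m ∈ Finset.range p, g (m + 1) = ∑ m ∈ Finset.range p, g m := by
    have e1 : ∑ m ∈ Finset.range (p + 1), g m
        = (∑ m ∈ Finset.range p, g (m + 1)) + g 0 := Finset.sum_range_succ' g p
    have e2 : ∑ m ∈ Finset.range (p + 1), g m
        = (∑ m ∈ Finset.range p, g m) + g p := Finset.sum_range_succ g p
    have hg0 : g 0 = 0 := by
      rw [hg]; simp
    have hgp : g p = 0 := by
      rw [hg]
      simp only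
      rw [hpj, ZMod.val_zero]
    omega
  rw [hshift, ← Finset.sum_mul] at hsum
  simp only [smul_eq_mul] at hsum
  have : p * j.val = (∑ m ∈ Finset.range p, if g m + j.val < p ^ n then 0 else 1) * p ^ n := by
    omega
  have hfin : (∑ m ∈ Finset.range p, if g m + j.val < p ^ n then 0 else 1) * p ^ n
      = c * p ^ n := by
    rw [← this, hval]
    have hpn : p ^ n = p * p ^ (n - 1) := by
      rw [← pow_succ']
      congr 1
      omega
    rw [hpn]
    ring
  exact hfin

lemma ite_sum_smul {M : Type*} [AddCommMonoid M] (k : ℕ) (P : ℕ → Prop) [DecidablePred P]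
    (z : M) :
    ∑ m ∈ Finset.range k, (if P m then (0 : M) else z)
      = (∑ m ∈ Finset.range k, if P m then 0 else 1) • z := by
  rw [Finset.sum_smul]
  refine Finset.sum_congr rfl fun m _ => ?_
  split_ifs
  · rw [zero_smul]
  · rw [one_smul]

end AuxCount
section AuxInst
open Polynomial

instance GrpAlg.finite (p n : ℕ) [Fact p.Prime] : Finite (GrpAlg p n) := by
  haveI : NeZero p := ⟨(Fact.out : p.Prime).ne_zero⟩
  exact Finite.of_injective _ MonoidAlgebra.coeff_injective

instance Amod.finite (p n i : ℕ) [Fact p.Prime] : Finite (Amod p n i) :=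
  Finite.of_surjective _ Ideal.Quotient.mk_surjective

instance ASemi.finite (p n i : ℕ) [Fact p.Prime] [NeZero (p ^ n)] : Finite (ASemi p n i) :=
  Finite.of_injective (fun a => (a.f, a.j)) (fun a b h => by cases a; cases b; simp_all)

instance ABull.finite (p n i : ℕ) [Fact p.Prime] [NeZero (p ^ n)] : Finite (ABull p n i) :=
  Finite.of_injective (fun a => (a.f, a.j)) (fun a b h => by cases a; cases b; simp_all)

lemma subgroup_eq_of_card_quot {G : Type*} [Group G] [Finite G] (N K : Subgroup G)
    (h : N ≤ K) (hc : Nat.card (G ⧸ N) = Nat.card (G ⧸ K)) : N = K := by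
  have h1 := Subgroup.card_eq_card_quotient_mul_card_subgroup N
  have h2 := Subgroup.card_eq_card_quotient_mul_card_subgroup K
  rw [hc] at h1
  have h3 := h1.symm.trans h2
  have hpos : 0 < Nat.card (G ⧸ K) := Nat.card_pos
  have hcard : Nat.card N = Nat.card K := Nat.eq_of_mul_eq_mul_left hpos h3
  apply SetLike.ext'
  apply Set.eq_of_subset_of_ncard_le h ?_ (Set.toFinite _)
  rw [← Nat.card_coe_set_eq, ← Nat.card_coe_set_eq]
  exact hcard.ge

lemma uP_pow_cq (p n i : ℕ) [Fact p.Prime] (hi2 : i ≤ p ^ n) (c : ℕ) :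
    uP p i ^ (c * p ^ (n - 1)) = pmk p i ((1 + X ^ p ^ (n - 1)) ^ c) := by
  rw [uP, ← map_pow, mul_comm c, pow_mul, add_pow_char_pow, one_pow]

lemma pmk_cXq_ne_zero (p i q : ℕ) [Fact p.Prime] (c : ℕ) (hc0 : 0 < c) (hcp : c < p)
    (hqi : q < i) : pmk p i ((c : Polynomial (ZMod p)) * X ^ q) ≠ 0 := by
  intro h0
  rw [pmk_eq_zero_iff] at h0
  obtain ⟨g, hg⟩ := h0
  have h1 := congrArg (fun f => Polynomial.coeff f q) hg
  rw [← Polynomial.C_eq_natCast, Polynomial.coeff_C_mul, Polynomial.coeff_X_pow, if_pos rfl,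
    mul_one, mul_comm, Polynomial.coeff_mul_X_pow', if_neg (by omega)] at h1
  exact not_p_dvd p c hc0 hcp h1

end AuxInst

set_option maxHeartbeats 2000000
set_option synthInstance.maxHeartbeats 1000000

/-- (Lem. 5.5) Let `p` be an odd prime and `n ≥ 1`.
(i) If `p^{n−1}+2 ≤ i ≤ pⁿ` and `N` is a normal subgroup of `A_i ⋊ G_n` that is
elementary abelian with `(A_i ⋊ G_n)/N` cyclic of order `pⁿ`, then `N = A_i × {1}`,
i.e. `N` is the kernel of the natural projection.
(ii) If `p^{n−1}+1 ≤ i < pⁿ` and `N` is a normal subgroup of `A_i • G_n` that is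
elementary abelian with `(A_i • G_n)/N` cyclic of order `pⁿ`, then `N = A_i × {1}`.
(Consequently a Galois extension with one of these groups has a unique intermediate
`ℤ/pⁿℤ`-extension with elementary `p`-abelian complement.) -/
theorem unique_elementary_abelian_normal_subgroup
    (p n : ℕ) [Fact p.Prime] (hodd : Odd p) (hn : 1 ≤ n) :
    (∀ i : ℕ, p ^ (n - 1) + 2 ≤ i → i ≤ p ^ n →
      ∀ (N : Subgroup (ASemi p n i)) [N.Normal],
        (∀ x ∈ N, x ^ p = 1) → (∀ x y : ↥N, x * y = y * x) →
        IsCyclic (ASemi p n i ⧸ N) → Nat.card (ASemi p n i ⧸ N) = p ^ n →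
        N = (piSemi p n i).ker) ∧
    (∀ i : ℕ, p ^ (n - 1) + 1 ≤ i → i < p ^ n →
      ∀ (N : Subgroup (ABull p n i)) [N.Normal],
        (∀ x ∈ N, x ^ p = 1) → (∀ x y : ↥N, x * y = y * x) →
        IsCyclic (ABull p n i ⧸ N) → Nat.card (ABull p n i ⧸ N) = p ^ n →
        N = (piBull p n i).ker) := by
  have hp : p.Prime := Fact.out
  have hp2 : 2 ≤ p := hp.two_le
  haveI : NeZero (p ^ n) := ⟨pow_ne_zero n (by omega)⟩
  haveI : Fact (1 < p ^ n) := ⟨Nat.one_lt_pow (by omega) (by omega)⟩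
  constructor
  · -- part (i): ASemi
    intro i hi1 hi2 N _ hexp hcommN hcyc hcard
    have hker : N ≤ (piSemi p n i).ker := by
      intro x hx
      rw [MonoidHom.mem_ker]
      suffices hjx : x.j = 0 by
        show Multiplicative.ofAdd x.j = 1
        rw [hjx]
        rfl
      by_contra hj
      have hx_pow := hexp x hx
      have hpj : (p : ZMod (p ^ n)) * x.j = 0 := by
        have h1 := congrArg ASemi.j hx_pow
        rw [ASemi.pow_j] at h1
        exact h1
      obtain ⟨c, hc0, hcp, hval⟩ := val_decomp p n hn x.j hj hpj
      have hy := ASemi.tA_mem N hcyc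
      have hxy := hcommN ⟨x, hx⟩ ⟨⟨sigA p n i - 1, 0⟩, hy⟩
      have hxy' : x * ⟨sigA p n i - 1, 0⟩ = (⟨sigA p n i - 1, 0⟩ : ASemi p n i) * x :=
        congrArg Subtype.val hxy
      have hf : x.f + sigA p n i ^ x.j.val * (sigA p n i - 1)
          = (sigA p n i - 1) + sigA p n i ^ (0 : ZMod (p ^ n)).val * x.f :=
        congrArg ASemi.f hxy'
      rw [ZMod.val_zero, pow_zero, one_mul, hval] at hf
      exact key_contra p n i c hc0 hcp (by omega) hi2 (by linear_combination hf)
    have hsurj : Function.Surjective (piSemi p n i) := fun z => ⟨⟨0, z.toAdd⟩, rfl⟩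
    have hq2 : Nat.card (ASemi p n i ⧸ (piSemi p n i).ker) = p ^ n := by
      rw [Nat.card_congr (QuotientGroup.quotientKerEquivOfSurjective _ hsurj).toEquiv,
        Nat.card_congr (Multiplicative.toAdd (α := ZMod (p ^ n))), Nat.card_zmod]
    exact subgroup_eq_of_card_quot N _ hker (by rw [hcard, hq2])
  · -- part (ii): ABull
    intro i hi1 hi2 N _ hexp hcommN hcyc hcard
    have hi2' : i ≤ p ^ n := le_of_lt hi2
    have hker : N ≤ (piBull p n i).ker := by
      intro x hx
      rw [MonoidHom.mem_ker]
      suffices hjx : x.j = 0 by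
        show Multiplicative.ofAdd x.j = 1
        rw [hjx]
        rfl
      by_contra hj
      have hx_pow := hexp x hx
      have hpj : (p : ZMod (p ^ n)) * x.j = 0 := by
        have h1 := congrArg ABull.j hx_pow
        rw [ABull.pow_j] at h1
        exact h1
      obtain ⟨c, hc0, hcp, hval⟩ := val_decomp p n hn x.j hj hpj
      rcases Nat.lt_or_ge i (p ^ (n - 1) + 2) with hlt | hge
      · -- case i = p^(n-1) + 1 : use the x^p computation
        have hieq : i = p ^ (n - 1) + 1 := by omega
        have hq1 : 1 ≤ p ^ (n - 1) := Nat.one_le_pow _ _ (by omega)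
        have hfp : (∑ m ∈ Finset.range p, sigA p n i ^ ((m : ZMod (p ^ n)) * x.j).val) * x.f
            + ∑ m ∈ Finset.range p,
              (if ((m : ZMod (p ^ n)) * x.j).val + x.j.val < p ^ n then (0 : Amod p n i)
                else (sigA p n i - 1) ^ (i - 1)) = 0 := by
          rw [← ABull.pow_f, hx_pow]
          rfl
        have hPhi := congrArg (PhiB p n i hi2') hfp
        simp only [map_add, map_mul, map_sum, map_zero] at hPhi
        -- the geometric sum vanishes
        set w : PRing p i := uP p i ^ x.j.val - 1 with hwdef
        have hterm : ∀ m ∈ Finset.range p,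
            PhiB p n i hi2' (sigA p n i ^ ((m : ZMod (p ^ n)) * x.j).val) = (1 + w) ^ m := by
          intro m _
          rw [map_pow, PhiB_sigA]
          have h1 : ((m : ZMod (p ^ n)) * x.j).val = m * x.j.val % p ^ n := by
            conv_lhs => rw [show ((m : ZMod (p ^ n)) * x.j) = ((m * x.j.val : ℕ) : ZMod (p ^ n))
              by push_cast [ZMod.natCast_val, ZMod.cast_id]; ring]
            rw [ZMod.val_natCast]
          rw [h1, ← pow_eq_pow_mod _ (uP_pow_order p n i hi2'), mul_comm m, pow_mul]
          congr 1
          rw [hwdef]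
          ring
        rw [Finset.sum_congr rfl hterm] at hPhi
        -- w * w = 0
        obtain ⟨s, hs⟩ := one_add_pow_sq (X ^ p ^ (n - 1) : Polynomial (ZMod p)) c
        have hwp : w = pmk p i ((c : Polynomial (ZMod p)) * X ^ p ^ (n - 1)
            + (X ^ p ^ (n - 1)) ^ 2 * s) := by
          rw [hwdef, hval, uP_pow_cq p n i hi2', hs, ← map_one (pmk p i), ← map_sub]
          congr 1
          ring
        have hw2 : w * w = 0 := by
          rw [hwp, ← map_mul, pmk_eq_zero_iff]
          have hd : (X : Polynomial (ZMod p)) ^ (2 * p ^ (n - 1)) ∣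
              ((c : Polynomial (ZMod p)) * X ^ p ^ (n - 1) + (X ^ p ^ (n - 1)) ^ 2 * s)
              * ((c : Polynomial (ZMod p)) * X ^ p ^ (n - 1) + (X ^ p ^ (n - 1)) ^ 2 * s) := by
            refine ⟨((c : Polynomial (ZMod p)) + X ^ p ^ (n - 1) * s)
              * ((c : Polynomial (ZMod p)) + X ^ p ^ (n - 1) * s), ?_⟩
            rw [two_mul, pow_add]
            ring
          exact dvd_trans (pow_dvd_pow X (by omega)) hd
        have hgeom : ∑ m ∈ Finset.range p, (1 + w) ^ m = 0 :=
          geom_sum_sq_zero p w hw2 (PRing_p_eq_zero p i) (p_dvd_gauss p hodd)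
        rw [hgeom, zero_mul, zero_add] at hPhi
        have hPhiE : PhiB p n i hi2' ((sigA p n i - 1) ^ (i - 1)) = pmk p i (X ^ (i - 1)) := by
          rw [map_pow, PhiB_t, map_pow]
        have hite : ∀ m ∈ Finset.range p,
            (PhiB p n i hi2') (if ((m : ZMod (p ^ n)) * x.j).val + x.j.val < p ^ n
                then (0 : Amod p n i) else (sigA p n i - 1) ^ (i - 1))
            = (if ((m : ZMod (p ^ n)) * x.j).val + x.j.val < p ^ n then (0 : ℕ) else 1)
                • pmk p i (X ^ (i - 1)) := by
          intro m _
          split_ifs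
          · rw [map_zero, zero_smul]
          · rw [hPhiE, one_smul]
        rw [Finset.sum_congr rfl hite, ← Finset.sum_smul] at hPhi
        have hcount := carry_count p n hn x.j c hval hpj
        have hK : (∑ m ∈ Finset.range p,
            if ((m : ZMod (p ^ n)) * x.j).val + x.j.val < p ^ n then 0 else 1) = c :=
          Nat.eq_of_mul_eq_mul_right (Nat.pow_pos (n := n) (by omega)) hcount
        rw [hK] at hPhi
        have hfin : pmk p i ((c : Polynomial (ZMod p)) * X ^ (i - 1)) = 0 := by
          rw [map_mul, map_natCast, ← nsmul_eq_mul]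
          exact hPhi
        exact pmk_cXq_ne_zero p i (i - 1) c hc0 hcp (by omega) hfin
      · -- case i ≥ p^(n-1) + 2 : commutator argument
        have hy := ABull.tA_mem N hcyc
        have hxy := hcommN ⟨x, hx⟩ ⟨⟨sigA p n i - 1, 0⟩, hy⟩
        have hxy' : x * ⟨sigA p n i - 1, 0⟩ = (⟨sigA p n i - 1, 0⟩ : ABull p n i) * x :=
          congrArg Subtype.val hxy
        have hf : x.f + sigA p n i ^ x.j.val * (sigA p n i - 1)
            + (if x.j.val + (0 : ZMod (p ^ n)).val < p ^ n then (0 : Amod p n i)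
                else (sigA p n i - 1) ^ (i - 1))
            = (sigA p n i - 1) + sigA p n i ^ (0 : ZMod (p ^ n)).val * x.f
            + (if (0 : ZMod (p ^ n)).val + x.j.val < p ^ n then (0 : Amod p n i)
                else (sigA p n i - 1) ^ (i - 1)) :=
          congrArg ABull.f hxy'
        have hvlt := ZMod.val_lt x.j
        rw [ZMod.val_zero, pow_zero, one_mul, if_pos (by omega), if_pos (by omega), hval] at hf
        exact key_contra p n i c hc0 hcp (by omega) hi2' (by linear_combination hf)
    have hsurj : Function.Surjective (piBull p n i) := fun z => ⟨⟨0, z.toAdd⟩, rfl⟩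
    have hq2 : Nat.card (ABull p n i ⧸ (piBull p n i).ker) = p ^ n := by
      rw [Nat.card_congr (QuotientGroup.quotientKerEquivOfSurjective _ hsurj).toEquiv,
        Nat.card_congr (Multiplicative.toAdd (α := ZMod (p ^ n))), Nat.card_zmod]
    exact subgroup_eq_of_card_quot N _ hker (by rw [hcard, hq2])
end

section
/- Let p be an odd prime and n ≥ 3. The group A_2 • G_{n−2} (where G_{n−2} = ℤ/p^{n−2}ℤ) is a nonabelian group of order pⁿ in which the element (0, σ) has order p^{n−1}; in particular A_2 • G_{n−2} contains an element of order p^{n−1}. -/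
open Polynomial

section ModularAux

open DualNumber TrivSqZeroExt

variable (p m : ℕ) [Fact p.Prime]

/-- The monoid hom `ZMod (p^m) → (ZMod p)[ε]ˣ`-ish map `j ↦ 1 + j ε`. -/
noncomputable def chiDN (hm : m ≠ 0) :
    Multiplicative (ZMod (p ^ m)) →* DualNumber (ZMod p) where
  toFun x := 1 + (ZMod.castHom (dvd_pow_self p hm) (ZMod p) x.toAdd) • (ε : (ZMod p)[ε])
  map_one' := by simp
  map_mul' x y := by
    have key : ∀ a b : ZMod p, (a • (ε : (ZMod p)[ε])) * (b • ε) = 0 := by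
      intro a b
      rw [smul_mul_smul_comm, eps_mul_eps, smul_zero]
    simp only [toAdd_mul, map_add, add_smul]
    rw [mul_add, mul_one, add_mul, one_mul, key, add_zero]
    abel

noncomputable def psiDN (hm : m ≠ 0) : GrpAlg p m →ₐ[ZMod p] DualNumber (ZMod p) :=
  MonoidAlgebra.lift (ZMod p) _ _ (chiDN p m hm)

lemma psiDN_of (hm : m ≠ 0) (g : Multiplicative (ZMod (p ^ m))) :
    psiDN p m hm (MonoidAlgebra.of (ZMod p) _ g)
      = 1 + (ZMod.castHom (dvd_pow_self p hm) (ZMod p) g.toAdd) • (ε : (ZMod p)[ε]) := by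
  rw [psiDN, MonoidAlgebra.lift_of]
  rfl

lemma psiDN_sigGen_sub_one (hm : m ≠ 0) : psiDN p m hm (sigGen p m - 1) = ε := by
  rw [map_sub, map_one, sigGen, psiDN_of, toAdd_ofAdd, map_one, one_smul,
    add_sub_cancel_left]

noncomputable def psiBar (hm : m ≠ 0) : Amod p m 2 →ₐ[ZMod p] DualNumber (ZMod p) :=
  Ideal.Quotient.liftₐ _ (psiDN p m hm) (by
    intro a ha
    rw [Ideal.mem_span_singleton] at ha
    obtain ⟨c, rfl⟩ := ha
    rw [map_mul, map_pow, psiDN_sigGen_sub_one, sq, eps_mul_eps, zero_mul])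

set_option maxHeartbeats 1000000 in
set_option synthInstance.maxHeartbeats 400000 in
lemma psiBar_mk (hm : m ≠ 0) (y : GrpAlg p m) :
    psiBar p m hm (Ideal.Quotient.mk (Ideal.span {(sigGen p m - 1) ^ 2}) y)
      = psiDN p m hm y := by
  rw [psiBar, Ideal.Quotient.liftₐ_apply]
  rfl

set_option maxHeartbeats 1000000 in
set_option synthInstance.maxHeartbeats 400000 in
lemma psiBar_s (hm : m ≠ 0) : psiBar p m hm (sigA p m 2 - 1) = ε := by
  have h : sigA p m 2 - 1
      = Ideal.Quotient.mk (Ideal.span {(sigGen p m - 1) ^ 2}) (sigGen p m - 1) := by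
    rw [map_sub, map_one, sigA]
  rw [h, psiBar_mk, psiDN_sigGen_sub_one]

lemma s_ne_zero (hm : m ≠ 0) : sigA p m 2 - 1 ≠ 0 := by
  intro h
  have h1 := psiBar_s p m hm
  rw [h, map_zero] at h1
  haveI : Fact (1 < p) := ⟨(Fact.out (p := p.Prime)).one_lt⟩
  have h2 := congrArg (TrivSqZeroExt.snd) h1
  rw [snd_zero, DualNumber.eps, snd_inr] at h2
  exact zero_ne_one h2

lemma sigA_pow_one_add (k : ℕ) : sigA p m 2 ^ k = 1 + k • (sigA p m 2 - 1) := by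
  have hs : (sigA p m 2 - 1) * (sigA p m 2 - 1) = 0 := by
    have := sigA_sub_one_pow_self p m 2; rwa [sq] at this
  induction k with
  | zero => simp
  | succ k ih =>
    rw [pow_succ, ih, nsmul_eq_mul, nsmul_eq_mul, Nat.cast_add, Nat.cast_one]
    linear_combination (k : Amod p m 2) * hs

lemma mk_of_eq [NeZero (p ^ m)] (g : Multiplicative (ZMod (p ^ m))) :
    Ideal.Quotient.mk (Ideal.span {(sigGen p m - 1) ^ 2}) (MonoidAlgebra.of (ZMod p) _ g)
      = sigA p m 2 ^ g.toAdd.val := by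
  rw [sigA, ← map_pow]
  congr 1
  rw [sigGen, ← map_pow]
  congr 1
  rw [← ofAdd_nsmul, nsmul_eq_mul, mul_one, ZMod.natCast_val, ZMod.cast_id, ofAdd_toAdd]

noncomputable def phiDN : DualNumber (ZMod p) → Amod p m 2 :=
  fun d => algebraMap (ZMod p) _ (fst d) + (snd d) • (sigA p m 2 - 1)

lemma phiDN_add (d e : DualNumber (ZMod p)) :
    phiDN p m (d + e) = phiDN p m d + phiDN p m e := by
  simp only [phiDN, fst_add, snd_add, map_add, add_smul]
  abel

lemma phiDN_smul (r : ZMod p) (d : DualNumber (ZMod p)) :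
    phiDN p m (r • d) = r • phiDN p m d := by
  simp only [phiDN, fst_smul, snd_smul, smul_eq_mul, smul_add, smul_smul]
  rw [map_mul, ← Algebra.smul_def]

lemma phi_psi (hm : m ≠ 0) [NeZero (p ^ m)] (x : Amod p m 2) :
    phiDN p m (psiBar p m hm x) = x := by
  obtain ⟨y, rfl⟩ := Ideal.Quotient.mk_surjective x
  induction y using MonoidAlgebra.induction_on with
  | of g =>
    rw [psiBar_mk, psiDN_of, mk_of_eq, sigA_pow_one_add]
    have hc : (ZMod.castHom (dvd_pow_self p hm) (ZMod p) g.toAdd)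
        = ((g.toAdd.val : ℕ) : ZMod p) := by
      rw [ZMod.castHom_apply, ZMod.natCast_val]
    simp only [phiDN, fst_add, snd_add, fst_one, snd_one, fst_smul, snd_smul, hc,
      DualNumber.eps, fst_inr, snd_inr, smul_zero, mul_zero, add_zero, smul_eq_mul, mul_one,
      zero_add, map_one]
    rw [Nat.cast_smul_eq_nsmul]
  | add f g hf hg =>
    rw [map_add, map_add, phiDN_add, hf, hg]
  | smul r f hf =>
    have h1 : Ideal.Quotient.mk (Ideal.span {(sigGen p m - 1) ^ 2}) (r • f)
        = r • Ideal.Quotient.mk (Ideal.span {(sigGen p m - 1) ^ 2}) f := rfl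
    rw [h1, map_smul, phiDN_smul, hf]

lemma psi_phi (hm : m ≠ 0) [NeZero (p ^ m)] (d : DualNumber (ZMod p)) :
    psiBar p m hm (phiDN p m d) = d := by
  rw [phiDN, map_add, map_smul, psiBar_s]
  rw [AlgHom.commutes, ← inr_eq_smul_eps, algebraMap_eq_inl', Algebra.algebraMap_self_apply,
    inl_fst_add_inr_snd_eq]

noncomputable def amodEquiv (hm : m ≠ 0) [NeZero (p ^ m)] :
    Amod p m 2 ≃ DualNumber (ZMod p) :=
  ⟨psiBar p m hm, phiDN p m, phi_psi p m hm, psi_phi p m hm⟩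

lemma card_amod (hm : m ≠ 0) [NeZero (p ^ m)] : Nat.card (Amod p m 2) = p ^ 2 := by
  rw [Nat.card_congr (amodEquiv p m hm)]
  have h : Nat.card (DualNumber (ZMod p)) = Nat.card (ZMod p × ZMod p) := rfl
  rw [h, Nat.card_prod, Nat.card_zmod, sq]

def abullEquiv : ABull p m 2 ≃ Amod p m 2 × ZMod (p ^ m) :=
  ⟨fun a => (a.f, a.j), fun x => ⟨x.1, x.2⟩, fun _ => rfl, fun _ => rfl⟩

lemma gpow (hm : m ≠ 0) [NeZero (p ^ m)] (k : ℕ) (hk : k < p ^ m) :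
    (⟨0, 1⟩ : ABull p m 2) ^ k = ⟨0, (k : ZMod (p ^ m))⟩ := by
  have hp1 : 1 < p ^ m := Nat.one_lt_pow hm (Fact.out (p := p.Prime)).one_lt
  haveI : Fact (1 < p ^ m) := ⟨hp1⟩
  induction k with
  | zero => simp [ABull.one_def]
  | succ k ih =>
    rw [pow_succ, ih (by omega), ABull.mul_def]
    have hval : ((k : ZMod (p ^ m)).val) = k := ZMod.val_cast_of_lt (by omega)
    have hone : ((1 : ZMod (p ^ m)).val) = 1 := ZMod.val_one _
    simp only [hval, hone, mul_zero, add_zero, if_pos hk, ABull.mk.injEq]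
    exact ⟨by simp [hk], by push_cast; ring⟩

lemma gpow_pm (hm : m ≠ 0) [NeZero (p ^ m)] :
    (⟨0, 1⟩ : ABull p m 2) ^ (p ^ m) = ⟨sigA p m 2 - 1, 0⟩ := by
  have hp1 : 1 < p ^ m := Nat.one_lt_pow hm (Fact.out (p := p.Prime)).one_lt
  haveI : Fact (1 < p ^ m) := ⟨hp1⟩
  have h := gpow p m hm (p ^ m - 1) (by omega)
  have e : (⟨0, 1⟩ : ABull p m 2) ^ (p ^ m)
      = (⟨0, 1⟩ : ABull p m 2) ^ (p ^ m - 1) * ⟨0, 1⟩ := by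
    rw [← pow_succ]
    congr 1
    omega
  rw [e, h, ABull.mul_def]
  have hval : (((p ^ m - 1 : ℕ) : ZMod (p ^ m)).val) = p ^ m - 1 :=
    ZMod.val_cast_of_lt (by omega)
  have hone : ((1 : ZMod (p ^ m)).val) = 1 := ZMod.val_one _
  simp only [hval, hone, mul_zero, add_zero, ABull.mk.injEq]
  constructor
  · rw [if_neg (by omega), pow_one, zero_add]
  · have hcast : ((p ^ m - 1 : ℕ) : ZMod (p ^ m)) + 1
        = ((p ^ m - 1 + 1 : ℕ) : ZMod (p ^ m)) := by
      rw [Nat.cast_add, Nat.cast_one]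
    rw [hcast, show p ^ m - 1 + 1 = p ^ m by omega, ZMod.natCast_self]

lemma hpow [NeZero (p ^ m)] (k : ℕ) :
    (⟨sigA p m 2 - 1, 0⟩ : ABull p m 2) ^ k = ⟨k • (sigA p m 2 - 1), 0⟩ := by
  induction k with
  | zero => simp [ABull.one_def]
  | succ k ih =>
    rw [pow_succ, ih, ABull.mul_def]
    simp only [ZMod.val_zero, pow_zero, one_mul, add_zero, if_pos (NeZero.pos (p ^ m)),
      ABull.mk.injEq, zero_add]
    constructor
    · rw [succ_nsmul]
      try ring
    · try trivial

end ModularAux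

/-- (Ex. 3.6) Let `p` be an odd prime and `n ≥ 3`.  The group `A_2 • G_{n−2}` is a
nonabelian group of order `pⁿ` in which the element `(0, σ)` has order `p^{n−1}`; in
particular it contains an element of order `p^{n−1}` (so `A_2 • G_{n−2} ≅ M_{pⁿ}`). -/
theorem bull_A2_is_modular_group
    (p n : ℕ) [Fact p.Prime] (hodd : Odd p) (hn : 3 ≤ n) :
    (∃ a b : ABull p (n - 2) 2, a * b ≠ b * a) ∧
    Nat.card (ABull p (n - 2) 2) = p ^ n ∧
    orderOf (⟨0, 1⟩ : ABull p (n - 2) 2) = p ^ (n - 1) := by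
  set m := n - 2 with hm_def
  have hm : m ≠ 0 := by omega
  have hp := (Fact.out (p := p.Prime))
  haveI : NeZero (p ^ m) := ⟨pow_ne_zero m hp.ne_zero⟩
  have hp1 : 1 < p ^ m := Nat.one_lt_pow hm hp.one_lt
  haveI : Fact (1 < p ^ m) := ⟨hp1⟩
  have hone : ((1 : ZMod (p ^ m)).val) = 1 := ZMod.val_one _
  refine ⟨⟨⟨0, 1⟩, ⟨1, 0⟩, ?_⟩, ?_, ?_⟩
  · have h1 : (⟨0, 1⟩ : ABull p m 2) * ⟨1, 0⟩ = ⟨sigA p m 2, 1⟩ := by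
      rw [ABull.mul_def]
      simp only [hone, ZMod.val_zero, ABull.mk.injEq]
      exact ⟨by rw [if_pos (by omega), pow_one]; ring, by ring⟩
    have h2 : (⟨1, 0⟩ : ABull p m 2) * ⟨0, 1⟩ = ⟨1, 1⟩ := by
      rw [ABull.mul_def]
      simp only [hone, ZMod.val_zero, ABull.mk.injEq]
      exact ⟨by rw [if_pos (by omega)]; ring, by ring⟩
    rw [h1, h2]
    intro h
    have hf := congrArg ABull.f h
    simp only at hf
    exact s_ne_zero p m hm (by rw [hf]; ring)
  · rw [Nat.card_congr (abullEquiv p m), Nat.card_prod, card_amod p m hm, Nat.card_zmod,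
      ← pow_add]
    congr 1
    omega
  · have h1 : (⟨0, 1⟩ : ABull p m 2) ^ (p ^ (m + 1)) = 1 := by
      have e : (⟨0, 1⟩ : ABull p m 2) ^ (p ^ (m + 1))
          = ((⟨0, 1⟩ : ABull p m 2) ^ (p ^ m)) ^ p := by
        rw [← pow_mul, ← pow_succ]
      rw [e, gpow_pm p m hm, hpow, ← Nat.cast_smul_eq_nsmul (ZMod p),
        ZMod.natCast_self, zero_smul]
      rfl
    have h2 : ¬(⟨0, 1⟩ : ABull p m 2) ^ (p ^ m) = 1 := by
      rw [gpow_pm p m hm]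
      intro h
      have hf := congrArg ABull.f h
      simp only [ABull.one_def] at hf
      exact s_ne_zero p m hm hf
    have h3 := orderOf_eq_prime_pow h2 h1
    rw [h3]
    congr 1
    omega
end
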